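/- arXiv:2407.15381 — 9 statements merged into one kernel-verified Lean document; each statement's English description precedes it below -/
import Mathlib

section
/- Let R be a commutative ring and x ∈ R an element such that R is x-torsion free (i.e. multiplication by x is injective on R). Then the x-adic completion R̂ = lim_n R/x^nR is x-torsion free: multiplication by (the image of) x is injective on R̂. -/
/-- If `R` is `x`-torsion free, then the `x`-adic completion
`R̂ = lim_n R/x^nR` is `x`-torsion free: multiplication by (the image of) `x`
is injective on `R̂`. -/
theorem stmt0 {R : Type*} [CommRing R] (x : R)
    (hx : Function.Injective fun a : R => x * a) :
    Function.Injective fun c : AdicCompletion (Ideal.span {x}) R =>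
      algebraMap R (AdicCompletion (Ideal.span {x}) R) x * c := by
  set I := Ideal.span {x} with hI
  have key : ∀ c : AdicCompletion I R,
      algebraMap R (AdicCompletion I R) x * c = 0 → c = 0 := by
    intro c hc
    have hc' : x • c = 0 := by rw [Algebra.smul_def]; exact hc
    apply AdicCompletion.ext
    intro n
    obtain ⟨a, ha⟩ := Submodule.Quotient.mk_surjective _ (c.val (n + 1))
    have hxa : x * a ∈ (I ^ (n + 1) • ⊤ : Ideal R) := by
      have h1 : (x • c).val (n + 1) = 0 := by rw [hc']; rfl
      rw [AdicCompletion.val_smul_apply, ← ha] at h1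
      have h2 : (Submodule.Quotient.mk (x * a) :
          R ⧸ (I ^ (n + 1) • ⊤ : Ideal R)) = 0 := by
        rw [← h1, ← Submodule.Quotient.mk_smul]; rfl
      exact (Submodule.Quotient.mk_eq_zero _).mp h2
    have hsm : (I ^ (n + 1) • ⊤ : Ideal R) = Ideal.span {x ^ (n + 1)} := by
      rw [smul_eq_mul, Ideal.mul_top, hI, Ideal.span_singleton_pow]
    rw [hsm, Ideal.mem_span_singleton] at hxa
    obtain ⟨r, hr⟩ := hxa
    have haI : a ∈ (I ^ n • ⊤ : Ideal R) := by
      have : a = x ^ n * r := by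
        apply hx
        show x * a = x * (x ^ n * r)
        rw [hr, pow_succ]; ring
      rw [smul_eq_mul, Ideal.mul_top, hI, Ideal.span_singleton_pow,
        Ideal.mem_span_singleton]
      exact ⟨r, this⟩
    have := AdicCompletion.transitionMap_comp_eval_apply I R
      (Nat.le_succ n) c
    rw [← this, ← ha]
    rw [AdicCompletion.val_zero]
    rw [show (Submodule.Quotient.mk a : R ⧸ (I ^ (n+1) • ⊤ : Ideal R))
      = Submodule.Quotient.mk (p := (I ^ (n+1) • ⊤ : Submodule R R)) a from rfl,
      ← Submodule.mkQ_apply, Submodule.factor_mk, Submodule.mkQ_apply]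
    exact (Submodule.Quotient.mk_eq_zero _).mpr haI
  intro c1 c2 h
  have h' := key (c1 - c2) (by simpa [mul_sub, sub_eq_zero] using h)
  exact sub_eq_zero.mp h'
end

section
/- Let R be a commutative ring, x ∈ R, and let R̂ = lim_n R/x^nR be the x-adic completion. For every integer n ≥ 1, the canonical homomorphism R → R̂ induces an isomorphism R/x^nR ≅ R̂/x^nR̂. -/
open AdicCompletion

/-- If an element of the `(x)`-adic completion has vanishing `n`-th component, then it
lies in the ideal generated by the image of `(x)^n`. -/
theorem aux_mem_of_val_eq_zero {R : Type*} [CommRing R] (x : R) (n : ℕ)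
    (c : AdicCompletion (Ideal.span {x}) R) (hc : c.val n = 0) :
    c ∈ Ideal.map (algebraMap R (AdicCompletion (Ideal.span {x}) R)) (Ideal.span {x} ^ n) := by
  obtain ⟨f, rfl⟩ := AdicCompletion.mk_surjective (Ideal.span {x}) R c
  have hsm : ∀ k : ℕ, (Ideal.span {x} ^ k • ⊤ : Ideal R) = Ideal.span {x ^ k} := fun k => by
    ext y; simp [Ideal.span_singleton_pow]
  -- `f n ∈ I ^ n`
  have hfn : f.val n ∈ Ideal.span {x} ^ n := by
    rw [AdicCompletion.mk_apply_coe, Submodule.mkQ_apply, Submodule.Quotient.mk_eq_zero,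
      hsm] at hc
    rwa [Ideal.span_singleton_pow]
  -- choose coefficients for the successive differences
  have hdiff : ∀ m : ℕ, ∃ d : R, d * x ^ (n + m) = f.val (n + m + 1) - f.val (n + m) := by
    intro m
    have h1 : f.val (n + m + 1) - f.val (n + m) ∈ (Ideal.span {x} ^ (n + m) • ⊤ : Ideal R) := by
      rw [← Submodule.neg_mem_iff, neg_sub, ← SModEq.sub_mem]
      exact f.property (Nat.le_succ (n + m))
    rw [hsm, Ideal.mem_span_singleton'] at h1
    exact h1
  choose d hd using hdiff
  set a : ℕ → R := fun m => d m * x ^ m with ha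
  have hxa : ∀ m, x ^ n * a m = f.val (n + m + 1) - f.val (n + m) := by
    intro m
    calc x ^ n * (d m * x ^ m) = d m * x ^ (n + m) := by ring
      _ = f.val (n + m + 1) - f.val (n + m) := hd m
  set b : ℕ → R := fun k => ∑ m ∈ Finset.range k, a m with hb
  have hbk : ∀ k, b (k + 1) = b k + a k := fun k => by
    simp [hb, Finset.sum_range_succ]
  have hbc : ∀ k, b k ≡ b (k + 1) [SMOD (Ideal.span {x} ^ k • ⊤ : Ideal R)] := by
    intro k
    rw [SModEq.sub_mem, hbk]
    have h2 : b k - (b k + a k) = -(a k) := by ring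
    rw [h2, Submodule.neg_mem_iff, hsm]
    exact Ideal.mem_span_singleton'.mpr ⟨d k, rfl⟩
  set g : AdicCompletion (Ideal.span {x}) R :=
    AdicCompletion.mk (Ideal.span {x}) R (AdicCauchySequence.mk (Ideal.span {x}) R b hbc) with hg
  have htel : ∀ k, f.val n + x ^ n * b k = f.val (n + k) := by
    intro k
    induction k with
    | zero => simp [hb]
    | succ k ih =>
      calc f.val n + x ^ n * b (k + 1)
          = (f.val n + x ^ n * b k) + x ^ n * a k := by rw [hbk]; ring
        _ = f.val (n + k) + (f.val (n + k + 1) - f.val (n + k)) := by rw [ih, hxa]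
        _ = f.val (n + k + 1) := by ring
  have key : AdicCompletion.mk (Ideal.span {x}) R f
      = algebraMap R (AdicCompletion (Ideal.span {x}) R) (f.val n) + x ^ n • g := by
    ext k
    show Submodule.Quotient.mk (f.val k) =
      (algebraMap R (AdicCompletion (Ideal.span {x}) R) (f.val n) + x ^ n • g).val k
    have h1 : (algebraMap R (AdicCompletion (Ideal.span {x}) R) (f.val n)).val k =
        Submodule.Quotient.mk (p := (Ideal.span {x} ^ k • ⊤ : Ideal R)) (f.val n) := rfl
    have h2 : (x ^ n • g).val k =
        Submodule.Quotient.mk (p := (Ideal.span {x} ^ k • ⊤ : Ideal R)) (x ^ n * b k) := by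
      rw [AdicCompletion.val_smul]
      show (x ^ n : R) • Submodule.Quotient.mk (p := (Ideal.span {x} ^ k • ⊤ : Ideal R)) (b k) = _
      rw [← Submodule.Quotient.mk_smul]
      simp [smul_eq_mul]
    rw [AdicCompletion.val_add, Pi.add_apply, h1, h2, ← Submodule.Quotient.mk_add, htel]
    exact (AdicCauchySequence.mk_eq_mk (Nat.le_add_left k n) f).symm
  rw [key]
  refine Ideal.add_mem _ (Ideal.mem_map_of_mem _ hfn) ?_
  rw [Algebra.smul_def]
  refine Ideal.mul_mem_right _ _ (Ideal.mem_map_of_mem _ ?_)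
  exact Ideal.pow_mem_pow (Ideal.mem_span_singleton_self x) n

/-- For a commutative ring `R`, `x ∈ R`, and the `x`-adic completion
`R̂ = lim_n R/x^nR`, for every `n ≥ 1` the canonical homomorphism `R → R̂` induces an
isomorphism `R/x^nR ≅ R̂/x^nR̂`. -/
theorem stmt1 {R : Type*} [CommRing R] (x : R) (n : ℕ) (hn : 1 ≤ n) :
    Function.Bijective
      (Ideal.quotientMap
        (Ideal.map (algebraMap R (AdicCompletion (Ideal.span {x}) R)) (Ideal.span {x} ^ n))
        (algebraMap R (AdicCompletion (Ideal.span {x}) R))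
        Ideal.le_comap_map) := by
  set I : Ideal R := Ideal.span {x} with hI
  set C := AdicCompletion I R
  set φ : R →+* C := algebraMap R C
  set J : Ideal C := Ideal.map φ (I ^ n)
  constructor
  · -- injectivity
    refine Ideal.quotientMap_injective' ?_
    intro r hr
    rw [Ideal.mem_comap] at hr
    have hJ : J ≤ RingHom.ker (evalₐ I n).toRingHom := by
      rw [Ideal.map_le_iff_le_comap]
      intro a ha
      rw [Ideal.mem_comap, RingHom.mem_ker]
      show evalₐ I n (algebraMap R C a) = 0
      rw [AlgHom.commutes]
      exact Ideal.Quotient.eq_zero_iff_mem.mpr ha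
    have h0 := hJ hr
    rw [RingHom.mem_ker] at h0
    have heval : evalₐ I n (φ r) = Ideal.Quotient.mk (I ^ n) r := AlgHom.commutes _ r
    rw [show (evalₐ I n).toRingHom (φ r) = evalₐ I n (φ r) from rfl, heval] at h0
    exact Ideal.Quotient.eq_zero_iff_mem.mp h0
  · -- surjectivity
    intro y
    obtain ⟨c, rfl⟩ := Ideal.Quotient.mk_surjective y
    obtain ⟨r, hr⟩ := Submodule.Quotient.mk_surjective _ (c.val n)
    refine ⟨Ideal.Quotient.mk (I ^ n) r, ?_⟩
    rw [Ideal.quotientMap_mk, Ideal.Quotient.mk_eq_mk_iff_sub_mem]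
    have hval : (φ r - c).val n = 0 := by
      rw [AdicCompletion.val_sub]
      show Submodule.Quotient.mk r - c.val n = 0
      rw [hr, sub_self]
    exact aux_mem_of_val_eq_zero x n (φ r - c) hval
end

section
/- Fix a prime p. Let R be a commutative ring such that for every prime ideal 𝔭 of R containing p, the localization R_𝔭 is p-torsion free (multiplication by p is injective on R_𝔭). Then for every integer n ≥ 1 the map R/p^nR → R/p^{n+1}R induced by multiplication by p is injective; equivalently, the sequence 0 → R/p^nR →(·p)→ R/p^{n+1}R → R/pR → 0 is exact. -/
/-- Fix a prime `p`. If for every prime ideal `𝔭` of `R` containing `p`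
the localization `R_𝔭` is `p`-torsion free, then for every `n ≥ 1` the map
`R/p^nR → R/p^{n+1}R` induced by multiplication by `p` is injective, i.e. for `a : R`,
if `p·a ∈ p^{n+1}R` then `a ∈ p^nR`. -/
theorem stmt2 (p : ℕ) (hp : p.Prime) {R : Type*} [CommRing R]
    (h : ∀ (P : Ideal R) [P.IsPrime], (p : R) ∈ P →
      Function.Injective fun a : Localization.AtPrime P => (p : Localization.AtPrime P) * a)
    (n : ℕ) (hn : 1 ≤ n) :
    ∀ a : R, (p : R) * a ∈ Ideal.span {(p : R) ^ (n + 1)} →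
      a ∈ Ideal.span {(p : R) ^ n} := by
  intro a ha
  rw [Ideal.mem_span_singleton] at ha
  obtain ⟨b, hb⟩ := ha
  set x := a - (p : R) ^ n * b with hx
  have hpx : (p : R) * x = 0 := by
    have : (p : R) * a = (p : R) * ((p : R) ^ n * b) := by
      rw [hb]; ring
    rw [hx]; rw [mul_sub, this]; ring
  have hxmem : x ∈ Ideal.span {(p : R) ^ n} := by
    apply Ideal.mem_of_localization_maximal
    intro P hP
    by_cases hpP : (p : R) ∈ P
    · have hinj := h P hpP
      have h0 : algebraMap R (Localization.AtPrime P) x = 0 := by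
        have := congrArg (algebraMap R (Localization.AtPrime P)) hpx
        rw [map_mul, map_zero] at this
        have hp' : algebraMap R (Localization.AtPrime P) (p : R)
            = (p : Localization.AtPrime P) := by push_cast; ring
        rw [hp'] at this
        have := hinj (a₁ := algebraMap R (Localization.AtPrime P) x) (a₂ := 0) (by
          simpa using this)
        exact this
      rw [h0]
      exact Ideal.zero_mem _
    · -- p is a unit in the localization, so the map of the ideal is ⊤
      have hu : IsUnit (algebraMap R (Localization.AtPrime P) (p : R)) :=
        IsLocalization.map_units (M := P.primeCompl) _ ⟨(p : R), hpP⟩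
      have : Ideal.map (algebraMap R (Localization.AtPrime P))
          (Ideal.span {(p : R) ^ n}) = ⊤ := by
        rw [Ideal.eq_top_iff_one]
        have hm : algebraMap R (Localization.AtPrime P) ((p : R) ^ n) ∈
            Ideal.map (algebraMap R (Localization.AtPrime P)) (Ideal.span {(p : R) ^ n}) :=
          Ideal.mem_map_of_mem _ (Ideal.subset_span rfl)
        have hun : IsUnit (algebraMap R (Localization.AtPrime P) ((p : R) ^ n)) := by
          rw [map_pow]; exact hu.pow n
        obtain ⟨u, hu'⟩ := hun
        have := Ideal.mul_mem_left _ (↑u⁻¹) hm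
        rwa [← hu', ← Units.val_mul, inv_mul_cancel, Units.val_one] at this
      rw [this]; trivial
  rw [Ideal.mem_span_singleton] at hxmem ⊢
  obtain ⟨c, hc⟩ := hxmem
  exact ⟨b + c, by rw [mul_add, ← hc, hx]; ring⟩
end

section
/- Fix a prime p. Let R be a commutative ring such that for every prime ideal 𝔭 of R containing p, the localization R_𝔭 is p-torsion free (multiplication by p is injective on R_𝔭). Then the p-adic completion R̂ = lim_n R/p^nR is p-torsion free. -/
/-- Fix a prime `p`. If for every prime ideal `𝔭` of `R` containing `p`
the localization `R_𝔭` is `p`-torsion free, then the `p`-adic completion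
`R̂ = lim_n R/p^nR` is `p`-torsion free. -/
theorem stmt3 (p : ℕ) (hp : p.Prime) {R : Type*} [CommRing R]
    (h : ∀ (P : Ideal R) [P.IsPrime], (p : R) ∈ P →
      Function.Injective fun a : Localization.AtPrime P => (p : Localization.AtPrime P) * a) :
    Function.Injective fun c : AdicCompletion (Ideal.span {(p : R)}) R =>
      (p : AdicCompletion (Ideal.span {(p : R)}) R) * c := by
  classical
  -- Step 1 : `R` itself is `p`-torsion free.
  have hloc : ∀ (P : Ideal R) [P.IsMaximal],
      Function.Injective fun a : Localization.AtPrime P => (p : R) • a := by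
    intro P hP
    by_cases hpP : (p : R) ∈ P
    · have := h P hpP
      intro a b hab
      apply this
      simpa [Algebra.smul_def] using hab
    · have hu : IsUnit (algebraMap R (Localization.AtPrime P) (p : R)) :=
        IsLocalization.map_units (Localization.AtPrime P) (⟨(p : R), hpP⟩ : P.primeCompl)
      intro a b hab
      apply hu.mul_right_injective
      simpa [Algebra.smul_def] using hab
  have hinj : Function.Injective fun a : R => (p : R) * a := by
    have key := injective_of_isLocalized_maximal
      (fun (P : Ideal R) (_ : P.IsMaximal) => Localization.AtPrime P)
      (fun (P : Ideal R) (_ : P.IsMaximal) => Algebra.linearMap R (Localization.AtPrime P))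
      (fun (P : Ideal R) (_ : P.IsMaximal) => Localization.AtPrime P)
      (fun (P : Ideal R) (_ : P.IsMaximal) => Algebra.linearMap R (Localization.AtPrime P))
      ((p : R) • (LinearMap.id : R →ₗ[R] R)) ?_
    · intro a b hab
      exact key (by simpa [smul_eq_mul] using hab)
    · intro P hP
      have : IsLocalizedModule.map P.primeCompl
          (Algebra.linearMap R (Localization.AtPrime P))
          (Algebra.linearMap R (Localization.AtPrime P))
          ((p : R) • (LinearMap.id : R →ₗ[R] R))
          = (p : R) • (LinearMap.id : Localization.AtPrime P →ₗ[R] Localization.AtPrime P) := by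
        rw [map_smul, IsLocalizedModule.map_id]
      rw [this]
      intro a b hab
      exact hloc P (by simpa using hab)
  -- Step 2 : deduce torsion-freeness of the completion.
  set I : Ideal R := Ideal.span {(p : R)}
  have hIk : ∀ k : ℕ, (I ^ k • ⊤ : Submodule R R) = (I ^ k : Ideal R) := fun k => by
    rw [Ideal.smul_eq_mul, Ideal.mul_top]
  intro c d hcd
  have hcd' : (p : AdicCompletion I R) * c = (p : AdicCompletion I R) * d := hcd
  have hsub : (p : AdicCompletion I R) * (c - d) = 0 := by
    rw [mul_sub, hcd', sub_self]
  set e := c - d with he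
  have hzero : e = 0 := by
    apply Subtype.ext
    funext n
    -- lift `e.val (n+1)` to an element `x` of `R`
    obtain ⟨x, hx⟩ := Submodule.Quotient.mk_surjective _ (e.val (n + 1))
    -- `p * x ∈ p^(n+1) R`
    have hpx : (p : R) * x ∈ (I ^ (n + 1) : Ideal R) := by
      have hps : (p : AdicCompletion I R) * e = (p : ℕ) • e := by
        rw [nsmul_eq_mul]
      have heval : ((p : ℕ) • e).val (n + 1) = 0 := by
        rw [← hps, hsub]
        rfl
      have hv : ((p : ℕ) • e).val (n + 1) = (p : ℕ) • (e.val (n + 1)) := rfl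
      rw [hv, ← hx, ← Submodule.Quotient.mk_smul, Submodule.Quotient.mk_eq_zero] at heval
      rw [← hIk (n + 1)]
      simpa [nsmul_eq_mul] using heval
    -- hence `x ∈ p^n R`
    have hxmem : x ∈ (I ^ n • ⊤ : Submodule R R) := by
      rw [hIk n]
      have hspan : (I ^ (n + 1) : Ideal R) = Ideal.span {(p : R) ^ (n + 1)} := by
        rw [show I = Ideal.span {(p : R)} from rfl, Ideal.span_singleton_pow]
      rw [hspan, Ideal.mem_span_singleton] at hpx
      obtain ⟨y, hy⟩ := hpx
      have : (p : R) * x = (p : R) * ((p : R) ^ n * y) := by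
        rw [hy, pow_succ, mul_comm ((p:R)^n) (p:R), mul_assoc]
      have hxy : x = (p : R) ^ n * y := hinj this
      rw [show I = Ideal.span {(p : R)} from rfl, Ideal.span_singleton_pow,
        Ideal.mem_span_singleton]
      exact ⟨y, hxy⟩
    have htrans := e.property (Nat.le_succ n)
    rw [← htrans, ← hx]
    show AdicCompletion.transitionMap I R (Nat.le_succ n) (Submodule.Quotient.mk x) = 0
    rw [AdicCompletion.transitionMap]
    exact (Submodule.Quotient.mk_eq_zero _).mpr hxmem
  exact sub_eq_zero.mp hzero
end

section
/- Fix a prime p. Let B be a p-torsion-free commutative ring with two Frobenius lifts φ₁, φ₂ and associated δ-operators δ₁, δ₂ such that δ₁(a) − δ₂(a) ∈ pB for all a ∈ B; extend everything to B[1/p]. Then for every x ∈ B and every integer r ≥ 0, the B-subalgebras of B[1/p] given by B₁^r = adjoin_B{ δ₁^t(x/p) : 0 ≤ t ≤ r } and B₂^r = adjoin_B{ δ₂^t(x/p) : 0 ≤ t ≤ r } are equal. -/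
open Finset


lemma stmt8_pow_add_mul {R : Type*} [CommRing R] (X c a : R) (i : ℕ) :
    ∃ r, (X + c * a) ^ i = X ^ i + c * r := by
  induction i with
  | zero => exact ⟨0, by ring⟩
  | succ i ih =>
    obtain ⟨r, hr⟩ := ih
    exact ⟨r * X + (X ^ i + c * r) * a, by rw [pow_succ, hr]; ring⟩

lemma stmt8_HB {B : Type*} [CommRing B] {p : ℕ}
    (φ₁ φ₂ : B →+* B) (δB₁ δB₂ : B → B)
    (hδB₁ : ∀ a : B, (p : B) * δB₁ a = φ₁ a - a ^ p)
    (hδB₂ : ∀ a : B, (p : B) * δB₂ a = φ₂ a - a ^ p) (d : B) :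
    ∃ g, (∑ i ∈ range p, (φ₁ d) ^ i * (φ₂ d) ^ (p - 1 - i)) = (p : B) * g := by
  have h1 : φ₁ d = d ^ p + (p : B) * δB₁ d := by linear_combination -hδB₁ d
  have h2 : φ₂ d = d ^ p + (p : B) * δB₂ d := by linear_combination -hδB₂ d
  have key : ∀ i ∈ range p, ∃ r, (φ₁ d) ^ i * (φ₂ d) ^ (p - 1 - i)
      = (d ^ p) ^ (p - 1) + (p : B) * r := by
    intro i hi
    rw [mem_range] at hi
    obtain ⟨r1, hr1⟩ := stmt8_pow_add_mul (d ^ p) (p : B) (δB₁ d) i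
    obtain ⟨r2, hr2⟩ := stmt8_pow_add_mul (d ^ p) (p : B) (δB₂ d) (p - 1 - i)
    refine ⟨r1 * ((d ^ p) ^ (p - 1 - i) + (p:B) * r2) + (d ^ p) ^ i * r2, ?_⟩
    rw [h1, h2, hr1, hr2]
    have hexp : (d ^ p) ^ i * (d ^ p) ^ (p - 1 - i) = (d ^ p) ^ (p - 1) := by
      rw [← pow_add]; congr 1; omega
    rw [← hexp]; ring
  choose r hr using key
  refine ⟨(d ^ p) ^ (p - 1) + ∑ i ∈ (range p).attach, r i.1 i.2, ?_⟩
  calc (∑ i ∈ range p, (φ₁ d) ^ i * (φ₂ d) ^ (p - 1 - i))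
      = ∑ i ∈ (range p).attach, (φ₁ d) ^ i.1 * (φ₂ d) ^ (p - 1 - i.1) :=
        (Finset.sum_attach _ _).symm
    _ = ∑ i ∈ (range p).attach, ((d ^ p) ^ (p - 1) + (p : B) * r i.1 i.2) :=
        Finset.sum_congr rfl fun i _ => hr i.1 i.2
    _ = (range p).attach.card • (d ^ p) ^ (p - 1)
          + (p : B) * ∑ i ∈ (range p).attach, r i.1 i.2 := by
        rw [Finset.sum_add_distrib, Finset.sum_const, Finset.mul_sum]
    _ = (p : B) * ((d ^ p) ^ (p - 1) + ∑ i ∈ (range p).attach, r i.1 i.2) := by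
        rw [Finset.card_attach, card_range, nsmul_eq_mul]; ring

lemma stmt8_LB {B : Type*} [CommRing B] {p : ℕ}
    (φ₁ φ₂ : B →+* B) (δB₁ δB₂ : B → B)
    (hδB₁ : ∀ a : B, (p : B) * δB₁ a = φ₁ a - a ^ p)
    (hδB₂ : ∀ a : B, (p : B) * δB₂ a = φ₂ a - a ^ p)
    (hdiff : ∀ a : B, ∃ c : B, δB₁ a - δB₂ a = (p : B) * c) :
    ∀ (m : ℕ) (b : B), ∃ c, φ₁ ((φ₂ ^ m) b) - (φ₂ ^ (m + 1)) b = (p : B) ^ (m + 2) * c := by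
  intro m
  induction m with
  | zero =>
    intro b
    obtain ⟨c, hc⟩ := hdiff b
    refine ⟨c, ?_⟩
    simp only [pow_zero, RingHom.one_def, RingHom.id_apply, zero_add, pow_one]
    linear_combination -hδB₁ b + hδB₂ b + (p : B) * hc
  | succ m ih =>
    intro b
    set d := (φ₂ ^ m) b with hd
    have hφ₂b : φ₂ b = b ^ p + (p : B) * δB₂ b := by linear_combination -hδB₂ b
    have hsplit : (φ₂ ^ (m + 1)) b = d ^ p + (p : B) * (φ₂ ^ m) (δB₂ b) := by
      rw [pow_succ, RingHom.mul_def, RingHom.comp_apply, hφ₂b, map_add, map_pow, map_mul,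
        map_natCast]
    have hstep2 : (φ₂ ^ (m + 2)) b = φ₂ ((φ₂ ^ (m + 1)) b) := by
      rw [show m + 2 = (m + 1) + 1 from rfl, pow_succ', RingHom.mul_def, RingHom.comp_apply]
    obtain ⟨c₁, hc₁⟩ := ih b
    obtain ⟨c₂, hc₂⟩ := ih (δB₂ b)
    obtain ⟨g, hg⟩ := stmt8_HB φ₁ φ₂ δB₁ δB₂ hδB₁ hδB₂ d
    have hgeo := geom_sum₂_mul (φ₁ d) (φ₂ d) p
    refine ⟨c₁ * g + c₂, ?_⟩
    have expand : φ₁ ((φ₂ ^ (m + 1)) b) - (φ₂ ^ (m + 2)) b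
        = ((φ₁ d) ^ p - (φ₂ d) ^ p) + (p : B) * (φ₁ ((φ₂ ^ m) (δB₂ b)) - (φ₂ ^ (m+1)) (δB₂ b)) := by
      rw [hstep2, hsplit, map_add, map_add, map_mul, map_mul, map_natCast, map_natCast,
        map_pow, map_pow]
      have : φ₂ ((φ₂ ^ m) (δB₂ b)) = (φ₂ ^ (m + 1)) (δB₂ b) := by
        rw [pow_succ', RingHom.mul_def, RingHom.comp_apply]
      rw [this]; ring
    rw [expand, ← hgeo]
    have hφd : φ₂ d = (φ₂ ^ (m + 1)) b := by
      rw [pow_succ', RingHom.mul_def, RingHom.comp_apply]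
    have hA : φ₁ d - φ₂ d = (p : B) ^ (m + 2) * c₁ := by rw [hφd]; exact hc₁
    linear_combination (φ₁ d - φ₂ d) * hg + (p : B) * hc₂ + ((p : B) * g) * hA



lemma stmt8_rpow_succ_apply {R : Type*} [Semiring R] (f : R →+* R) (m : ℕ) (y : R) :
    (f ^ (m + 1)) y = (f ^ m) (f y) := by
  simp [RingHom.coe_pow, Function.iterate_succ_apply]

lemma stmt8_rpow_succ_apply' {R : Type*} [Semiring R] (f : R →+* R) (m : ℕ) (y : R) :
    (f ^ (m + 1)) y = f ((f ^ m) y) := by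
  simp [RingHom.coe_pow, Function.iterate_succ_apply']

lemma stmt8_gs_decomp {R : Type*} [CommRing R] (p : ℕ) (A C : R) :
    (∑ i ∈ range p, A ^ i * C ^ (p - 1 - i)) =
      p * C ^ (p - 1) +
        (A - C) * ∑ i ∈ range p, (∑ j ∈ range i, A ^ j * C ^ (i - 1 - j)) * C ^ (p - 1 - i) := by
  have h : ∀ i ∈ range p, A ^ i * C ^ (p - 1 - i)
      = C ^ (p - 1) + (A - C) * ((∑ j ∈ range i, A ^ j * C ^ (i - 1 - j)) * C ^ (p - 1 - i)) := by
    intro i hi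
    rw [mem_range] at hi
    have hg := geom_sum₂_mul A C i
    have hexp : C ^ i * C ^ (p - 1 - i) = C ^ (p - 1) := by
      rw [← pow_add]; congr 1; omega
    calc A ^ i * C ^ (p - 1 - i)
        = C ^ i * C ^ (p - 1 - i) + (A ^ i - C ^ i) * C ^ (p - 1 - i) := by ring
      _ = C ^ (p - 1) + (A - C) * ((∑ j ∈ range i, A ^ j * C ^ (i - 1 - j)) * C ^ (p - 1 - i)) := by
          rw [hexp, ← hg]; ring
  rw [Finset.sum_congr rfl h, Finset.sum_add_distrib, Finset.sum_const, card_range,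
    ← Finset.mul_sum]
  simp [nsmul_eq_mul]

section Main

variable {B : Type*} [CommRing B] {p : ℕ}

theorem stmt8_incl (hp : p.Prime)
    (φ₁ φ₂ : B →+* B) (δB₁ δB₂ : B → B)
    (hδB₁ : ∀ a : B, (p : B) * δB₁ a = φ₁ a - a ^ p)
    (hδB₂ : ∀ a : B, (p : B) * δB₂ a = φ₂ a - a ^ p)
    (hdiff : ∀ a : B, ∃ c : B, δB₁ a - δB₂ a = (p : B) * c)
    {L : Type*} [CommRing L] [Algebra B L] (hpu : IsUnit (p : L))
    (ψ₁ ψ₂ : L →+* L)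
    (hψ₁ : ∀ b : B, ψ₁ (algebraMap B L b) = algebraMap B L (φ₁ b))
    (hψ₂ : ∀ b : B, ψ₂ (algebraMap B L b) = algebraMap B L (φ₂ b))
    (δ₁ δ₂ : L → L)
    (hδ₁ : ∀ y : L, (p : L) * δ₁ y = ψ₁ y - y ^ p)
    (hδ₂ : ∀ y : L, (p : L) * δ₂ y = ψ₂ y - y ^ p)
    (x : B) (u : L) (hu : (p : L) * u = algebraMap B L x) (r : ℕ) :
    Algebra.adjoin B {y : L | ∃ t ≤ r, y = δ₁^[t] u}
      ≤ Algebra.adjoin B {y : L | ∃ t ≤ r, y = δ₂^[t] u} := by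
  have cancel : ∀ a b : L, (p : L) * a = (p : L) * b → a = b := fun a b h =>
    hpu.mul_left_cancel h
  set S : ℕ → Subalgebra B L := fun n => Algebra.adjoin B {y : L | ∃ t ≤ n, y = δ₂^[t] u}
    with hSdef
  have hSmono : ∀ {m n : ℕ}, m ≤ n → S m ≤ S n := fun {m n} hmn =>
    Algebra.adjoin_mono (fun y hy => by
      obtain ⟨t, ht, hy⟩ := hy; exact ⟨t, le_trans ht hmn, hy⟩)
  have hzS : ∀ {t n : ℕ}, t ≤ n → δ₂^[t] u ∈ S n := fun {t n} h =>
    Algebra.subset_adjoin ⟨t, h, rfl⟩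
  -- generic δ-operator identities
  have dmul : ∀ (ψ : L →+* L) (δ : L → L), (∀ y, (p : L) * δ y = ψ y - y ^ p) → ∀ a b : L,
      δ (a * b) = a ^ p * δ b + b ^ p * δ a + (p : L) * (δ a * δ b) := by
    intro ψ δ hδ a b
    refine cancel _ _ ?_
    have ha : ψ a = (p : L) * δ a + a ^ p := by linear_combination -hδ a
    have hb : ψ b = (p : L) * δ b + b ^ p := by linear_combination -hδ b
    have hab : (p : L) * δ (a * b) = ψ a * ψ b - (a * b) ^ p := by rw [hδ (a * b), map_mul]
    rw [hab, ha, hb]; ring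
  have dadd : ∀ (ψ : L →+* L) (δ : L → L), (∀ y, (p : L) * δ y = ψ y - y ^ p) → ∀ a b : L,
      δ (a + b) = δ a + δ b
        - ∑ k ∈ Finset.Ioo 0 p, a ^ k * b ^ (p - k) * ((p.choose k / p : ℕ) : L) := by
    intro ψ δ hδ a b
    refine cancel _ _ ?_
    have hpow := add_pow_prime_eq' hp a b
    have hab : (p : L) * δ (a + b) = ψ a + ψ b - (a + b) ^ p := by rw [hδ (a + b), map_add]
    rw [hab, hpow]
    linear_combination -hδ a - hδ b
  have dalg : ∀ (ψ : L →+* L) (δ : L → L) (φ : B →+* B) (δB : B → B),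
      (∀ y, (p : L) * δ y = ψ y - y ^ p) →
      (∀ b, ψ (algebraMap B L b) = algebraMap B L (φ b)) →
      (∀ a, (p : B) * δB a = φ a - a ^ p) → ∀ b : B,
      δ (algebraMap B L b) = algebraMap B L (δB b) := by
    intro ψ δ φ δB hδ hψ hδB b
    refine cancel _ _ ?_
    rw [hδ, hψ, ← map_pow, ← map_sub, ← hδB, map_mul, map_natCast]
  have Emem : ∀ (n : ℕ) (a b : L), a ∈ S n → b ∈ S n →
      (∑ k ∈ Finset.Ioo 0 p, a ^ k * b ^ (p - k) * ((p.choose k / p : ℕ) : L)) ∈ S n := by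
    intro n a b ha hb
    exact Subalgebra.sum_mem _ fun k _ =>
      mul_mem (mul_mem (pow_mem ha k) (pow_mem hb _)) (Subalgebra.natCast_mem _ _)
  -- δ₂ maps S n into S (n+1)
  have D2 : ∀ (n : ℕ) (v : L), v ∈ S n → δ₂ v ∈ S (n + 1) := by
    intro n v hv
    induction hv using Algebra.adjoin_induction with
    | mem y hy =>
      obtain ⟨t, ht, rfl⟩ := hy
      rw [← Function.iterate_succ_apply' δ₂ t u]
      exact hzS (by omega)
    | algebraMap b =>
      rw [dalg ψ₂ δ₂ φ₂ δB₂ hδ₂ hψ₂ hδB₂ b]; exact Subalgebra.algebraMap_mem _ _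
    | add a b ha hb iha ihb =>
      rw [dadd ψ₂ δ₂ hδ₂ a b]
      exact sub_mem (add_mem iha ihb)
        (Emem (n + 1) a b (hSmono n.le_succ ha) (hSmono n.le_succ hb))
    | mul a b ha hb iha ihb =>
      rw [dmul ψ₂ δ₂ hδ₂ a b]
      exact add_mem (add_mem (mul_mem (pow_mem (hSmono n.le_succ ha) p) ihb)
        (mul_mem (pow_mem (hSmono n.le_succ hb) p) iha))
        (mul_mem (Subalgebra.natCast_mem _ p) (mul_mem iha ihb))
  have ψ2S : ∀ (n : ℕ) (v : L), v ∈ S n → ψ₂ v ∈ S (n + 1) := by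
    intro n v hv
    have h : ψ₂ v = v ^ p + (p : L) * δ₂ v := by linear_combination -hδ₂ v
    rw [h]
    exact add_mem (pow_mem (hSmono n.le_succ hv) p)
      (mul_mem (Subalgebra.natCast_mem _ p) (D2 n v hv))
  have ψ2iter : ∀ (m n : ℕ) (v : L), v ∈ S n → (ψ₂ ^ m) v ∈ S (n + m) := by
    intro m
    induction m with
    | zero => intro n v hv; simpa using hv
    | succ m ih =>
      intro n v hv
      rw [stmt8_rpow_succ_apply']
      have h := ψ2S (n + m) _ (ih n v hv)
      exact hSmono (by omega) h
  have ψiterι : ∀ (m : ℕ) (b : B),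
      (ψ₂ ^ m) (algebraMap B L b) = algebraMap B L ((φ₂ ^ m) b) := by
    intro m
    induction m with
    | zero => intro b; simp
    | succ m ih =>
      intro b
      rw [stmt8_rpow_succ_apply', ih b, hψ₂]
      congr 1
      rw [pow_succ', RingHom.mul_def, RingHom.comp_apply]
  -- Claim M : the fundamental congruence between the two Frobenius towers
  have M : ∀ (t m : ℕ), ∃ s ∈ S (t + m + 1),
      ψ₁ ((ψ₂ ^ m) (δ₂^[t] u)) - (ψ₂ ^ (m + 1)) (δ₂^[t] u) = (p : L) ^ (m + 1) * s := by
    intro t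
    induction t with
    | zero =>
      intro m
      obtain ⟨c, hc⟩ := stmt8_LB φ₁ φ₂ δB₁ δB₂ hδB₁ hδB₂ hdiff m x
      refine ⟨algebraMap B L c, Subalgebra.algebraMap_mem _ _, ?_⟩
      refine cancel _ _ ?_
      have h1 : (p : L) * (ψ₂ ^ m) u = algebraMap B L ((φ₂ ^ m) x) := by
        calc (p : L) * (ψ₂ ^ m) u = (ψ₂ ^ m) ((p : L) * u) := by rw [map_mul, map_natCast]
          _ = (ψ₂ ^ m) (algebraMap B L x) := by rw [hu]
          _ = algebraMap B L ((φ₂ ^ m) x) := ψiterι m x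
      have h2 : (p : L) * ψ₁ ((ψ₂ ^ m) u) = algebraMap B L (φ₁ ((φ₂ ^ m) x)) := by
        rw [← map_natCast ψ₁ p, ← map_mul, h1, hψ₁]
      have h3 : (p : L) * (ψ₂ ^ (m + 1)) u = algebraMap B L ((φ₂ ^ (m + 1)) x) := by
        rw [stmt8_rpow_succ_apply', ← map_natCast ψ₂ p, ← map_mul, h1, hψ₂]
        congr 1
        rw [pow_succ', RingHom.mul_def, RingHom.comp_apply]
      calc (p : L) * (ψ₁ ((ψ₂ ^ m) (δ₂^[0] u)) - (ψ₂ ^ (m + 1)) (δ₂^[0] u))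
          = (p : L) * ψ₁ ((ψ₂ ^ m) u) - (p : L) * (ψ₂ ^ (m + 1)) u := by
            rw [Function.iterate_zero_apply]; ring
        _ = algebraMap B L (φ₁ ((φ₂ ^ m) x) - (φ₂ ^ (m + 1)) x) := by
            rw [map_sub, h2, h3]
        _ = algebraMap B L ((p : B) ^ (m + 2) * c) := by rw [hc]
        _ = (p : L) * ((p : L) ^ (m + 1) * algebraMap B L c) := by
            rw [map_mul, map_pow, map_natCast]; ring
    | succ t ih =>
      intro m
      obtain ⟨s, hsS, hs⟩ := ih m
      obtain ⟨s', hs'S, hs'⟩ := ih (m + 1)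
      set z : L := δ₂^[t] u with hzdef
      set A : L := ψ₁ ((ψ₂ ^ m) z) with hAdef
      set C : L := (ψ₂ ^ (m + 1)) z with hCdef
      have hzt : z ∈ S t := hzS le_rfl
      have hCS : C ∈ S (t + m + 1) := by
        have := ψ2iter (m + 1) t z hzt
        exact hSmono (by omega) this
      have hAS : A ∈ S (t + m + 1) := by
        have hA : A = C + (p : L) ^ (m + 1) * s := by linear_combination hs
        rw [hA]
        exact add_mem hCS (mul_mem (pow_mem (Subalgebra.natCast_mem _ p) _) hsS)
      set K : L := ∑ i ∈ range p, (∑ j ∈ range i, A ^ j * C ^ (i - 1 - j)) * C ^ (p - 1 - i)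
        with hKdef
      have hKS : K ∈ S (t + m + 1) :=
        Subalgebra.sum_mem _ fun i _ => mul_mem
          (Subalgebra.sum_mem _ fun j _ => mul_mem (pow_mem hAS _) (pow_mem hCS _))
          (pow_mem hCS _)
      refine ⟨s' - s * C ^ (p - 1) - (p : L) ^ m * (s * s) * K, ?_, ?_⟩
      · refine sub_mem (sub_mem (hSmono (by omega) hs'S) ?_) ?_
        · exact mul_mem (hSmono (by omega) hsS) (pow_mem (hSmono (by omega) hCS) _)
        · exact mul_mem (mul_mem (pow_mem (Subalgebra.natCast_mem _ p) _)
            (mul_mem (hSmono (by omega) hsS) (hSmono (by omega) hsS))) (hSmono (by omega) hKS)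
      have e1 : (p : L) * ψ₁ ((ψ₂ ^ m) (δ₂^[t + 1] u)) = ψ₁ ((ψ₂ ^ (m + 1)) z) - A ^ p := by
        rw [Function.iterate_succ_apply' δ₂ t u, ← hzdef]
        calc (p : L) * ψ₁ ((ψ₂ ^ m) (δ₂ z))
            = ψ₁ ((ψ₂ ^ m) ((p : L) * δ₂ z)) := by rw [map_mul, map_mul, map_natCast, map_natCast]
          _ = ψ₁ ((ψ₂ ^ m) (ψ₂ z - z ^ p)) := by rw [hδ₂ z]
          _ = ψ₁ ((ψ₂ ^ (m + 1)) z) - A ^ p := by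
              rw [map_sub, map_sub, map_pow, map_pow, ← stmt8_rpow_succ_apply]
      have e2 : (p : L) * (ψ₂ ^ (m + 1)) (δ₂^[t + 1] u) = (ψ₂ ^ (m + 1 + 1)) z - C ^ p := by
        rw [Function.iterate_succ_apply' δ₂ t u, ← hzdef]
        calc (p : L) * (ψ₂ ^ (m + 1)) (δ₂ z)
            = (ψ₂ ^ (m + 1)) ((p : L) * δ₂ z) := by rw [map_mul, map_natCast]
          _ = (ψ₂ ^ (m + 1)) (ψ₂ z - z ^ p) := by rw [hδ₂ z]
          _ = (ψ₂ ^ (m + 1 + 1)) z - C ^ p := by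
              rw [map_sub, map_pow, ← stmt8_rpow_succ_apply]
      have egeo : A ^ p - C ^ p = (A - C) * (∑ i ∈ range p, A ^ i * C ^ (p - 1 - i)) := by
        rw [mul_comm]; exact (geom_sum₂_mul A C p).symm
      have egs := stmt8_gs_decomp p A C
      refine cancel _ _ ?_
      linear_combination e1 - e2 + hs' - egeo - (A - C) * egs
        - ((p : L) * C ^ (p - 1) + (A - C + (p : L) ^ (m + 1) * s) * K) * hs
  -- δ₁ on the generators of the second tower
  have δ1gen : ∀ t : ℕ, ∃ s ∈ S (t + 1), δ₁ (δ₂^[t] u) = δ₂^[t + 1] u + s := by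
    intro t
    obtain ⟨s, hsS, hs⟩ := M t 0
    refine ⟨s, hsS, ?_⟩
    refine cancel _ _ ?_
    have hs' : ψ₁ (δ₂^[t] u) - ψ₂ (δ₂^[t] u) = (p : L) * s := by
      simpa using hs
    rw [Function.iterate_succ_apply' δ₂ t u]
    linear_combination hδ₁ (δ₂^[t] u) - hδ₂ (δ₂^[t] u) + hs'
  -- δ₁ maps S n into S (n+1)
  have D1 : ∀ (n : ℕ) (v : L), v ∈ S n → δ₁ v ∈ S (n + 1) := by
    intro n v hv
    induction hv using Algebra.adjoin_induction with
    | mem y hy =>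
      obtain ⟨t, ht, rfl⟩ := hy
      obtain ⟨s, hsS, hs⟩ := δ1gen t
      rw [hs]
      exact add_mem (hzS (by omega)) (hSmono (by omega) hsS)
    | algebraMap b =>
      rw [dalg ψ₁ δ₁ φ₁ δB₁ hδ₁ hψ₁ hδB₁ b]; exact Subalgebra.algebraMap_mem _ _
    | add a b ha hb iha ihb =>
      rw [dadd ψ₁ δ₁ hδ₁ a b]
      exact sub_mem (add_mem iha ihb)
        (Emem (n + 1) a b (hSmono n.le_succ ha) (hSmono n.le_succ hb))
    | mul a b ha hb iha ihb =>
      rw [dmul ψ₁ δ₁ hδ₁ a b]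
      exact add_mem (add_mem (mul_mem (pow_mem (hSmono n.le_succ ha) p) ihb)
        (mul_mem (pow_mem (hSmono n.le_succ hb) p) iha))
        (mul_mem (Subalgebra.natCast_mem _ p) (mul_mem iha ihb))
  -- main induction : the two towers differ by elements of S t
  have P : ∀ t : ℕ, δ₁^[t] u - δ₂^[t] u ∈ S t := by
    intro t
    induction t with
    | zero => simpa using zero_mem (S 0)
    | succ t ih =>
      obtain ⟨s, hsS, hs⟩ := δ1gen t
      have key : δ₁^[t + 1] u - δ₂^[t + 1] u
          = s + δ₁ (δ₁^[t] u - δ₂^[t] u)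
            - ∑ k ∈ Finset.Ioo 0 p,
                (δ₂^[t] u) ^ k * (δ₁^[t] u - δ₂^[t] u) ^ (p - k) * ((p.choose k / p : ℕ) : L) := by
        have hy : δ₁^[t] u = δ₂^[t] u + (δ₁^[t] u - δ₂^[t] u) := by ring
        rw [Function.iterate_succ_apply' δ₁ t u, hy,
          dadd ψ₁ δ₁ hδ₁ (δ₂^[t] u) (δ₁^[t] u - δ₂^[t] u), hs]
        abel
      rw [key]
      refine sub_mem (add_mem hsS (D1 t _ ih)) ?_
      exact hSmono t.le_succ (Emem t _ _ (hzS le_rfl) ih)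
  -- conclusion
  apply Algebra.adjoin_le
  rintro y ⟨t, ht, rfl⟩
  have hy : δ₁^[t] u = δ₂^[t] u + (δ₁^[t] u - δ₂^[t] u) := by ring
  rw [hy]
  exact add_mem (hzS ht) (hSmono ht (P t))

end Main

/-- Let `B` be a `p`-torsion-free commutative ring with two Frobenius
lifts `φ₁, φ₂` (with `δ`-operators `δB₁, δB₂`) such that `δ₁(a) − δ₂(a) ∈ pB` for all
`a ∈ B`; extend everything to `B[1/p]`, giving `ψᵢ` and extended `δ`-operators `δᵢ`.
Then for every `x ∈ B` and `r ≥ 0`, the `B`-subalgebras of `B[1/p]`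
`B₁^r = adjoin_B{ δ₁^t(x/p) : 0 ≤ t ≤ r }` and `B₂^r = adjoin_B{ δ₂^t(x/p) : 0 ≤ t ≤ r }`
are equal. -/
theorem stmt8 (p : ℕ) (hp : p.Prime) {B : Type*} [CommRing B]
    (hB : Function.Injective fun b : B => (p : B) * b)
    (φ₁ φ₂ : B →+* B) (δB₁ δB₂ : B → B)
    (hδB₁ : ∀ a : B, (p : B) * δB₁ a = φ₁ a - a ^ p)
    (hδB₂ : ∀ a : B, (p : B) * δB₂ a = φ₂ a - a ^ p)
    (hdiff : ∀ a : B, ∃ c : B, δB₁ a - δB₂ a = (p : B) * c)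
    (ψ₁ ψ₂ : Localization.Away (p : B) →+* Localization.Away (p : B))
    (hψ₁ : ∀ b : B, ψ₁ (algebraMap B (Localization.Away (p : B)) b)
        = algebraMap B (Localization.Away (p : B)) (φ₁ b))
    (hψ₂ : ∀ b : B, ψ₂ (algebraMap B (Localization.Away (p : B)) b)
        = algebraMap B (Localization.Away (p : B)) (φ₂ b))
    (δ₁ δ₂ : Localization.Away (p : B) → Localization.Away (p : B))
    (hδ₁ : ∀ y : Localization.Away (p : B), (p : Localization.Away (p : B)) * δ₁ y = ψ₁ y - y ^ p)
    (hδ₂ : ∀ y : Localization.Away (p : B), (p : Localization.Away (p : B)) * δ₂ y = ψ₂ y - y ^ p)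
    (x : B) (r : ℕ) :
    Algebra.adjoin B {y : Localization.Away (p : B) | ∃ t ≤ r,
        y = δ₁^[t] (algebraMap B (Localization.Away (p : B)) x *
          IsLocalization.Away.invSelf (S := Localization.Away (p : B)) (p : B))} =
      Algebra.adjoin B {y : Localization.Away (p : B) | ∃ t ≤ r,
        y = δ₂^[t] (algebraMap B (Localization.Away (p : B)) x *
          IsLocalization.Away.invSelf (S := Localization.Away (p : B)) (p : B))} := by
  have hpL : ((p : ℕ) : Localization.Away (p : B))
      = algebraMap B (Localization.Away (p : B)) (p : B) :=
    (map_natCast (algebraMap B (Localization.Away (p : B))) p).symm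
  have hpu : IsUnit ((p : ℕ) : Localization.Away (p : B)) := by
    rw [hpL]; exact IsLocalization.Away.algebraMap_isUnit (p : B)
  have hu : ((p : ℕ) : Localization.Away (p : B)) *
      (algebraMap B (Localization.Away (p : B)) x *
        IsLocalization.Away.invSelf (S := Localization.Away (p : B)) (p : B))
      = algebraMap B (Localization.Away (p : B)) x := by
    rw [hpL]
    calc algebraMap B (Localization.Away (p : B)) (p : B) *
          (algebraMap B (Localization.Away (p : B)) x *
            IsLocalization.Away.invSelf (S := Localization.Away (p : B)) (p : B))
        = algebraMap B (Localization.Away (p : B)) x *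
          (algebraMap B (Localization.Away (p : B)) (p : B) *
            IsLocalization.Away.invSelf (S := Localization.Away (p : B)) (p : B)) := by ring
      _ = algebraMap B (Localization.Away (p : B)) x := by
          rw [IsLocalization.Away.mul_invSelf, mul_one]
  have hdiff' : ∀ a : B, ∃ c : B, δB₂ a - δB₁ a = (p : B) * c := by
    intro a
    obtain ⟨c, hc⟩ := hdiff a
    exact ⟨-c, by linear_combination -hc⟩
  exact le_antisymm
    (stmt8_incl hp φ₁ φ₂ δB₁ δB₂ hδB₁ hδB₂ hdiff hpu ψ₁ ψ₂ hψ₁ hψ₂ δ₁ δ₂ hδ₁ hδ₂ x _ hu r)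
    (stmt8_incl hp φ₂ φ₁ δB₂ δB₁ hδB₂ hδB₁ hdiff' hpu ψ₂ ψ₁ hψ₂ hψ₁ δ₂ δ₁ hδ₂ hδ₁ x _ hu r)
end

section
/- Fix a prime p. Let B be a p-torsion-free commutative ring with two Frobenius lifts φ₁, φ₂ and associated δ-operators δ₁, δ₂ such that δ₁(a) − δ₂(a) ∈ pB for all a ∈ B; extend everything to B[1/p]. Let I ⊆ B be an ideal containing p. Then the B-subalgebras of B[1/p] given by adjoin_B{ δ₁^i(x/p) : x ∈ I, i ≥ 0 } and adjoin_B{ δ₂^i(x/p) : x ∈ I, i ≥ 0 } are equal. -/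
/-- Binomial helper: `(a + p^m b)^p = a^p + p^(m+1) * b * s` with `s` in any subring
containing `a` and `b`. -/
lemma pow_helper (p : ℕ) (hp : p.Prime) {R : Type*} [CommRing R] (m : ℕ) (hm : 1 ≤ m)
    (a b : R) :
    ∃ s : R, (a + (p : R) ^ m * b) ^ p = a ^ p + (p : R) ^ (m + 1) * b * s ∧
      ∀ S : Subring R, a ∈ S → b ∈ S → s ∈ S := by
  have hdvd : ∀ k < p, p ^ (m + 1) ∣ p.choose k * p ^ (m * (p - k)) := by
    intro k hk
    rcases eq_or_lt_of_le (Nat.succ_le_of_lt hk) with h | h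
    · -- k = p - 1
      have hk1 : p - k = 1 := by omega
      have hch : p.choose k = p := by
        have h1 : p.choose (p - k) = p.choose k := Nat.choose_symm (Nat.le_of_lt hk)
        rw [hk1, Nat.choose_one_right] at h1
        omega
      rw [hch, hk1, mul_one, pow_succ, mul_comm]
    · -- p - k ≥ 2
      have : m * 2 ≤ m * (p - k) := Nat.mul_le_mul_left m (by omega)
      exact Dvd.dvd.mul_left (pow_dvd_pow p (by omega)) _
  refine ⟨∑ k ∈ Finset.range p, ((p.choose k * p ^ (m * (p - k)) / p ^ (m + 1) : ℕ) : R)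
      * a ^ k * b ^ (p - k - 1), ?_, ?_⟩
  · rw [add_pow, Finset.sum_range_succ]
    simp only [Nat.sub_self, pow_zero, mul_one, Nat.choose_self, Nat.cast_one]
    rw [add_comm (a ^ p)]
    congr 1
    rw [Finset.mul_sum]
    refine Finset.sum_congr rfl fun k hk => ?_
    have hk' : k < p := Finset.mem_range.mp hk
    have hb : ((p : R) ^ m * b) ^ (p - k) = (p : R) ^ (m * (p - k)) * (b ^ (p - k - 1) * b) := by
      have h1 : p - k = (p - k - 1) + 1 := by omega
      rw [mul_pow, ← pow_mul, h1, pow_succ]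
      ring_nf
      have h2 : 1 + (p - k - 1) - 1 = p - k - 1 := by omega
      rw [h2]
    have hcast : ((p.choose k * p ^ (m * (p - k)) : ℕ) : R)
        = (p : R) ^ (m + 1) * ((p.choose k * p ^ (m * (p - k)) / p ^ (m + 1) : ℕ) : R) := by
      rw [← Nat.cast_pow, ← Nat.cast_mul, Nat.mul_div_cancel' (hdvd k hk')]
    rw [hb]
    have : (p : R) ^ (m * (p - k)) * (p.choose k : R)
        = ((p.choose k * p ^ (m * (p - k)) : ℕ) : R) := by push_cast; ring
    calc a ^ k * ((p : R) ^ (m * (p - k)) * (b ^ (p - k - 1) * b)) * (p.choose k : R)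
        = (p : R) ^ (m * (p - k)) * (p.choose k : R) * a ^ k * (b ^ (p - k - 1) * b) := by ring
      _ = (p : R) ^ (m + 1) * b *
            (((p.choose k * p ^ (m * (p - k)) / p ^ (m + 1) : ℕ) : R) * a ^ k * b ^ (p - k - 1)) := by
          rw [this, hcast]; ring
  · intro S ha hb
    exact Subring.sum_mem S fun k _ => S.mul_mem (S.mul_mem (natCast_mem S _) (S.pow_mem ha _))
      (S.pow_mem hb _)

/-- Cross-term helper: `(a+b)^p = a^p + b^p + p*w`. -/
lemma add_pow_helper (p : ℕ) (hp : p.Prime) {R : Type*} [CommRing R] (a b : R) :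
    ∃ w : R, (a + b) ^ p = a ^ p + b ^ p + (p : R) * w ∧
      ∀ S : Subring R, a ∈ S → b ∈ S → w ∈ S := by
  obtain ⟨q, hq⟩ : ∃ q, p = q + 1 := ⟨p - 1, by have := hp.pos; omega⟩
  have hdvd : ∀ k, 0 < k → k < p → p ∣ p.choose k := fun k h1 h2 =>
    hp.dvd_choose_self (by omega) h2
  refine ⟨∑ k ∈ Finset.range q, ((p.choose (k+1) / p : ℕ) : R) * a ^ (k+1) * b ^ (p - (k+1)),
    ?_, ?_⟩
  · rw [add_pow, Finset.sum_range_succ]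
    simp only [Nat.sub_self, pow_zero, mul_one, Nat.choose_self, Nat.cast_one]
    have hsplit : ∑ k ∈ Finset.range p, a ^ k * b ^ (p - k) * (p.choose k : R)
        = b ^ p + ∑ k ∈ Finset.range q, a ^ (k+1) * b ^ (p - (k+1)) * (p.choose (k+1) : R) := by
      rw [hq, Finset.sum_range_succ']
      simp [add_comm]
    have hmid : ∑ k ∈ Finset.range q, a ^ (k+1) * b ^ (p - (k+1)) * (p.choose (k+1) : R)
        = (p : R) * ∑ k ∈ Finset.range q,
            ((p.choose (k+1) / p : ℕ) : R) * a ^ (k+1) * b ^ (p - (k+1)) := by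
      rw [Finset.mul_sum]
      refine Finset.sum_congr rfl fun k hk => ?_
      have hk' : k < q := Finset.mem_range.mp hk
      have hcast : ((p.choose (k+1) : ℕ) : R) = (p : R) * ((p.choose (k+1) / p : ℕ) : R) := by
        rw [← Nat.cast_mul, Nat.mul_div_cancel' (hdvd (k+1) (by omega) (by omega))]
      rw [hcast]; ring
    rw [hsplit, hmid]; ring
  · intro S ha hb
    exact Subring.sum_mem S fun k _ => S.mul_mem (S.mul_mem (natCast_mem S _) (S.pow_mem ha _))
      (S.pow_mem hb _)

lemma stmt9_aux (p : ℕ) (hp : p.Prime) {B R : Type*} [CommRing B] [CommRing R] [Algebra B R]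
    (u : R) (hpu : (p : R) * u = 1)
    (hB : Function.Injective fun b : B => (p : B) * b)
    (φ₁ φ₂ : B →+* B) (δB₁ δB₂ : B → B)
    (hδB₁ : ∀ a : B, (p : B) * δB₁ a = φ₁ a - a ^ p)
    (hδB₂ : ∀ a : B, (p : B) * δB₂ a = φ₂ a - a ^ p)
    (hdiff : ∀ a : B, ∃ c : B, δB₁ a - δB₂ a = (p : B) * c)
    (ψ₁ ψ₂ : R →+* R)
    (hψ₁ : ∀ b : B, ψ₁ (algebraMap B R b) = algebraMap B R (φ₁ b))
    (hψ₂ : ∀ b : B, ψ₂ (algebraMap B R b) = algebraMap B R (φ₂ b))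
    (δ₁ δ₂ : R → R)
    (hδ₁ : ∀ y : R, (p : R) * δ₁ y = ψ₁ y - y ^ p)
    (hδ₂ : ∀ y : R, (p : R) * δ₂ y = ψ₂ y - y ^ p)
    (I : Ideal B) :
    Algebra.adjoin B {y : R | ∃ x ∈ I, ∃ i : ℕ, y = δ₂^[i] (algebraMap B R x * u)} ≤
      Algebra.adjoin B {y : R | ∃ x ∈ I, ∃ i : ℕ, y = δ₁^[i] (algebraMap B R x * u)} := by
  set f := algebraMap B R with hf
  set A := Algebra.adjoin B {y : R | ∃ x ∈ I, ∃ i : ℕ, y = δ₁^[i] (f x * u)} with hA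
  -- basic cancellation facts
  have hpunit : IsUnit ((p : ℕ) : R) := IsUnit.of_mul_eq_one _ hpu
  have hcan : ∀ a b : R, (p : R) * a = (p : R) * b → a = b := fun a b h =>
    hpunit.mul_left_cancel h
  have hcan2 : ∀ (n : ℕ) (a b : R), (p : R) ^ n * a = (p : R) ^ n * b → a = b :=
    fun n a b h => (hpunit.pow n).mul_left_cancel h
  have hcanB : ∀ a b : B, (p : B) * a = (p : B) * b → a = b := fun a b h => hB h
  -- ψ's and naturals
  have hψ₁p : ∀ t : R, ψ₁ ((p : R) * t) = (p : R) * ψ₁ t := fun t => by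
    rw [map_mul, map_natCast]
  have hψ₂p : ∀ t : R, ψ₂ ((p : R) * t) = (p : R) * ψ₂ t := fun t => by
    rw [map_mul, map_natCast]
  have hψ₁eq : ∀ y : R, ψ₁ y = y ^ p + (p : R) * δ₁ y := fun y => by
    linear_combination -hδ₁ y
  -- δ₁ on the image of B
  have hδ₁f : ∀ b : B, δ₁ (f b) = f (δB₁ b) := by
    intro b
    apply hcan
    rw [hδ₁, hψ₁, show (p : R) * f (δB₁ b) = f ((p : B) * δB₁ b) by
      rw [map_mul, map_natCast], hδB₁, map_sub, map_pow]
  -- δ₁-stability of A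
  have hstab : ∀ y ∈ A, δ₁ y ∈ A := by
    intro y hy
    induction hy using Algebra.adjoin_induction with
    | mem y hy =>
        obtain ⟨x, hx, i, rfl⟩ := hy
        rw [show δ₁ (δ₁^[i] (f x * u)) = δ₁^[i+1] (f x * u) from
          (Function.iterate_succ_apply' δ₁ i _).symm]
        exact Algebra.subset_adjoin ⟨x, hx, i + 1, rfl⟩
    | algebraMap r => rw [show algebraMap B R r = f r from rfl, hδ₁f]
                      exact Subalgebra.algebraMap_mem _ _
    | add x y hx hy ihx ihy =>
        obtain ⟨w, hw, hwmem⟩ := add_pow_helper p hp x y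
        have hwA : w ∈ A := Subalgebra.mem_toSubring.mp
          (hwmem A.toSubring (Subalgebra.mem_toSubring.mpr hx) (Subalgebra.mem_toSubring.mpr hy))
        have h1 : δ₁ (x + y) = δ₁ x + δ₁ y - w := by
          apply hcan
          rw [hδ₁, map_add, hw]
          linear_combination -hδ₁ x - hδ₁ y
        rw [h1]
        exact sub_mem (add_mem ihx ihy) hwA
    | mul x y hx hy ihx ihy =>
        have h1 : δ₁ (x * y) = x ^ p * δ₁ y + y ^ p * δ₁ x + (p : R) * (δ₁ x * δ₁ y) := by
          apply hcan
          rw [hδ₁, map_mul, hψ₁eq x, hψ₁eq y]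
          ring
        rw [h1]
        refine add_mem (add_mem (mul_mem (pow_mem hx p) ihy) (mul_mem (pow_mem hy p) ihx)) ?_
        exact mul_mem (natCast_mem A p) (mul_mem ihx ihy)
  have hψstab : ∀ y ∈ A, ψ₁ y ∈ A := fun y hy => by
    rw [hψ₁eq]
    exact add_mem (pow_mem hy p) (mul_mem (natCast_mem A p) (hstab y hy))
  have hψkstab : ∀ (k : ℕ) (y : R), y ∈ A → ψ₁^[k] y ∈ A := by
    intro k
    induction k with
    | zero => intro y hy; simpa using hy
    | succ k ih =>
        intro y hy
        rw [Function.iterate_succ_apply']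
        exact hψstab _ (ih y hy)
  -- commutation lemmas in B
  have hcommB : ∀ a : B, δB₁ (φ₁ a) = φ₁ (δB₁ a) := by
    intro a
    apply hcanB
    rw [hδB₁, show (p : B) * φ₁ (δB₁ a) = φ₁ ((p : B) * δB₁ a) by rw [map_mul, map_natCast],
      hδB₁, map_sub, map_pow]
  have hcommBk : ∀ (k : ℕ) (a : B), δB₁ (φ₁^[k] a) = φ₁^[k] (δB₁ a) := by
    intro k
    induction k with
    | zero => intro a; rfl
    | succ k ih =>
        intro a
        rw [Function.iterate_succ_apply', hcommB, ih]
        exact (Function.iterate_succ_apply' φ₁ k (δB₁ a)).symm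
  -- Lemma L : key divisibility in B
  have hL : ∀ (k : ℕ) (b : B), ∃ e : B,
      φ₂ (φ₁^[k] b) - φ₁ (φ₁^[k] b) = (p : B) ^ (k + 2) * e := by
    intro k
    induction k with
    | zero =>
        intro b
        obtain ⟨c, hc⟩ := hdiff b
        refine ⟨-c, ?_⟩
        simp only [Function.iterate_zero, id_eq]
        linear_combination hδB₁ b - hδB₂ b - (p : B) * hc
    | succ k ih =>
        intro b
        obtain ⟨e₀, he₀⟩ := ih b
        obtain ⟨e₁, he₁⟩ := ih (δB₁ b)
        obtain ⟨s, hs, -⟩ := pow_helper p hp (k + 2) (by omega) (φ₁ (φ₁^[k] b)) e₀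
        refine ⟨e₀ * s + e₁, ?_⟩
        have hw' : φ₁^[k+1] b = φ₁^[k] b ^ p + (p : B) * δB₁ (φ₁^[k] b) := by
          rw [Function.iterate_succ_apply']
          linear_combination -hδB₁ ((⇑φ₁)^[k] b)
        have ha : φ₂ (φ₁^[k+1] b) = φ₂ (φ₁^[k] b) ^ p + (p : B) * φ₂ (δB₁ (φ₁^[k] b)) := by
          rw [hw', map_add, map_pow, map_mul, map_natCast]
        have hb' : φ₁ (φ₁^[k+1] b) = φ₁ (φ₁^[k] b) ^ p + (p : B) * φ₁ (δB₁ (φ₁^[k] b)) := by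
          rw [hw', map_add, map_pow, map_mul, map_natCast]
        have hφ₂w : φ₂ (φ₁^[k] b) = φ₁ (φ₁^[k] b) + (p : B) ^ (k + 2) * e₀ := by
          linear_combination he₀
        have hc : φ₂ (φ₁^[k] b) ^ p = φ₁ (φ₁^[k] b) ^ p + (p : B) ^ (k + 3) * (e₀ * s) := by
          rw [hφ₂w, hs]; ring
        have hd : φ₂ (δB₁ (φ₁^[k] b)) - φ₁ (δB₁ (φ₁^[k] b)) = (p : B) ^ (k + 2) * e₁ := by
          rw [hcommBk]; exact he₁
        linear_combination ha - hb' + hc + (p : B) * hd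
  -- transfer to R
  have hψ₁fk : ∀ (k : ℕ) (b : B), ψ₁^[k] (f b) = f (φ₁^[k] b) := by
    intro k
    induction k with
    | zero => intro b; rfl
    | succ k ih =>
        intro b
        rw [Function.iterate_succ_apply', ih, hψ₁]
        exact congrArg f (Function.iterate_succ_apply' φ₁ k b).symm
  have hcommδψ : ∀ y : R, δ₁ (ψ₁ y) = ψ₁ (δ₁ y) := by
    intro y
    apply hcan
    rw [hδ₁, ← hψ₁p, hδ₁, map_sub, map_pow]
  have hcommδψk : ∀ (k : ℕ) (y : R), δ₁ (ψ₁^[k] y) = ψ₁^[k] (δ₁ y) := by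
    intro k
    induction k with
    | zero => intro y; rfl
    | succ k ih =>
        intro y
        rw [Function.iterate_succ_apply', hcommδψ, ih]
        exact (Function.iterate_succ_apply' ψ₁ k (δ₁ y)).symm
  have hψkp : ∀ (k : ℕ) (t : R), ψ₁^[k] ((p : R) * t) = (p : R) * ψ₁^[k] t := by
    intro k
    induction k with
    | zero => intro t; rfl
    | succ k ih =>
        intro t
        rw [Function.iterate_succ_apply, hψ₁p, ih]
        exact congrArg (fun z => (p : R) * z) (Function.iterate_succ_apply ψ₁ k t).symm
  -- the difference operator
  have hD : ∀ y : R, (p : R) * (δ₂ y - δ₁ y) = ψ₂ y - ψ₁ y := fun y => by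
    linear_combination hδ₂ y - hδ₁ y
  -- main generator lemma
  have hGen : ∀ (i : ℕ), ∀ x ∈ I, ∀ k : ℕ, ∃ z ∈ A,
      δ₂ (ψ₁^[k] (δ₁^[i] (f x * u))) - δ₁ (ψ₁^[k] (δ₁^[i] (f x * u))) = (p : R) ^ k * z := by
    intro i
    induction i with
    | zero =>
        intro x hx k
        obtain ⟨e, he⟩ := hL k x
        refine ⟨f e, Subalgebra.algebraMap_mem _ _, ?_⟩
        simp only [Function.iterate_zero, id_eq]
        apply hcan2 2
        have h1 : (p : R) * (f x * u) = f x := by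
          rw [show (p : R) * (f x * u) = (p : R) * u * f x by ring, hpu, one_mul]
        have h2 : (p : R) * ψ₁^[k] (f x * u) = f (φ₁^[k] x) := by
          rw [← hψkp, h1, hψ₁fk]
        calc (p : R) ^ 2 * (δ₂ (ψ₁^[k] (f x * u)) - δ₁ (ψ₁^[k] (f x * u)))
            = (p : R) * ((p : R) * (δ₂ (ψ₁^[k] (f x * u)) - δ₁ (ψ₁^[k] (f x * u)))) := by ring
          _ = (p : R) * (ψ₂ (ψ₁^[k] (f x * u)) - ψ₁ (ψ₁^[k] (f x * u))) := by rw [hD]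
          _ = ψ₂ ((p : R) * ψ₁^[k] (f x * u)) - ψ₁ ((p : R) * ψ₁^[k] (f x * u)) := by
              rw [hψ₁p, hψ₂p]; ring
          _ = f (φ₂ (φ₁^[k] x) - φ₁ (φ₁^[k] x)) := by rw [h2, hψ₂, hψ₁, map_sub]
          _ = (p : R) ^ (k + 2) * f e := by
              rw [he, map_mul, map_pow, map_natCast]
          _ = (p : R) ^ 2 * ((p : R) ^ k * f e) := by ring
    | succ i ih =>
        intro x hx k
        have hyA : δ₁^[i] (f x * u) ∈ A := Algebra.subset_adjoin ⟨x, hx, i, rfl⟩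
        set y := δ₁^[i] (f x * u) with hy
        have hhA : ψ₁^[k] y ∈ A := hψkstab k y hyA
        set h := ψ₁^[k] y with hh
        obtain ⟨z₁, hz₁A, hz₁⟩ := ih x hx (k + 1)
        obtain ⟨z₂, hz₂A, hz₂⟩ := ih x hx k
        have hz₁' : δ₂ (ψ₁ h) - δ₁ (ψ₁ h) = (p : R) ^ (k + 1) * z₁ := by
          rw [hh, hy, ← Function.iterate_succ_apply' ψ₁ k]
          exact hz₁
        obtain ⟨s, hs, hsmem⟩ := pow_helper p hp 1 le_rfl (ψ₁ h) ((p : R) ^ k * z₂)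
        have hψ₂h : ψ₂ h = ψ₁ h + (p : R) ^ 1 * ((p : R) ^ k * z₂) := by
          linear_combination (p : R) * hz₂ - hD h
        have hDhp : (p : R) * (δ₂ (h ^ p) - δ₁ (h ^ p)) = (p : R) ^ (k + 2) * (z₂ * s) := by
          rw [hD, map_pow, map_pow, hψ₂h, hs]
          ring
        have hDhp' : δ₂ (h ^ p) - δ₁ (h ^ p) = (p : R) ^ (k + 1) * (z₂ * s) :=
          hcan _ _ (by rw [hDhp]; ring)
        have key : (p : R) * ((p : R) * (δ₂ (δ₁ h) - δ₁ (δ₁ h)))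
            = (p : R) * ((δ₂ (ψ₁ h) - δ₁ (ψ₁ h)) - (δ₂ (h ^ p) - δ₁ (h ^ p))) := by
          calc (p : R) * ((p : R) * (δ₂ (δ₁ h) - δ₁ (δ₁ h)))
              = (p : R) * (ψ₂ (δ₁ h) - ψ₁ (δ₁ h)) := by rw [hD]
            _ = ψ₂ ((p : R) * δ₁ h) - ψ₁ ((p : R) * δ₁ h) := by rw [hψ₁p, hψ₂p]; ring
            _ = ψ₂ (ψ₁ h - h ^ p) - ψ₁ (ψ₁ h - h ^ p) := by rw [hδ₁]
            _ = (ψ₂ (ψ₁ h) - ψ₁ (ψ₁ h)) - (ψ₂ (h ^ p) - ψ₁ (h ^ p)) := by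
                rw [map_sub, map_sub]; ring
            _ = (p : R) * (δ₂ (ψ₁ h) - δ₁ (ψ₁ h)) - (p : R) * (δ₂ (h ^ p) - δ₁ (h ^ p)) := by
                rw [hD, hD]
            _ = (p : R) * ((δ₂ (ψ₁ h) - δ₁ (ψ₁ h)) - (δ₂ (h ^ p) - δ₁ (h ^ p))) := by ring
        have key2 : (p : R) * (δ₂ (δ₁ h) - δ₁ (δ₁ h))
            = (δ₂ (ψ₁ h) - δ₁ (ψ₁ h)) - (δ₂ (h ^ p) - δ₁ (h ^ p)) := hcan _ _ key
        have hsA : s ∈ A := Subalgebra.mem_toSubring.mp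
          (hsmem A.toSubring (Subalgebra.mem_toSubring.mpr (hψstab h hhA))
            (Subalgebra.mem_toSubring.mpr (mul_mem (pow_mem (natCast_mem A p) k) hz₂A)))
        refine ⟨z₁ - z₂ * s, sub_mem hz₁A (mul_mem hz₂A hsA), ?_⟩
        have hrw : ψ₁^[k] (δ₁^[i+1] (f x * u)) = δ₁ h := by
          rw [Function.iterate_succ_apply' δ₁ i, ← hy, ← hcommδψk, ← hh]
        rw [hrw]
        apply hcan
        rw [key2, hz₁', hDhp']
        ring
  -- the full stability of A under D
  have hDA : ∀ y ∈ A, ∀ k : ℕ, ∃ z ∈ A, δ₂ (ψ₁^[k] y) - δ₁ (ψ₁^[k] y) = (p : R) ^ k * z := by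
    intro y hy
    induction hy using Algebra.adjoin_induction with
    | mem y hy =>
        obtain ⟨x, hx, i, rfl⟩ := hy
        exact hGen i x hx
    | algebraMap r =>
        intro k
        obtain ⟨e, he⟩ := hL k r
        refine ⟨(p : R) * f e, mul_mem (natCast_mem A p) (Subalgebra.algebraMap_mem _ _), ?_⟩
        apply hcan
        rw [show algebraMap B R r = f r from rfl, hψ₁fk, hD, hψ₂, hψ₁, ← map_sub, he,
          map_mul, map_pow, map_natCast]
        ring
    | add x y hx hy ihx ihy =>
        intro k
        obtain ⟨z₁, h1A, h1⟩ := ihx k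
        obtain ⟨z₂, h2A, h2⟩ := ihy k
        refine ⟨z₁ + z₂, add_mem h1A h2A, ?_⟩
        rw [iterate_map_add]
        have hDadd : δ₂ (ψ₁^[k] x + ψ₁^[k] y) - δ₁ (ψ₁^[k] x + ψ₁^[k] y)
            = (δ₂ (ψ₁^[k] x) - δ₁ (ψ₁^[k] x)) + (δ₂ (ψ₁^[k] y) - δ₁ (ψ₁^[k] y)) := by
          apply hcan
          rw [hD, map_add, map_add]
          linear_combination -hD ((⇑ψ₁)^[k] x) - hD ((⇑ψ₁)^[k] y)
        rw [hDadd, h1, h2]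
        ring
    | mul x y hx hy ihx ihy =>
        intro k
        obtain ⟨z₁, h1A, h1⟩ := ihx k
        obtain ⟨z₂, h2A, h2⟩ := ihy k
        have haA : ψ₁^[k] x ∈ A := hψkstab k x hx
        have hbA : ψ₁^[k] y ∈ A := hψkstab k y hy
        have hψ₂b : ψ₂ (ψ₁^[k] y) = ψ₁ (ψ₁^[k] y) + (p : R) * ((p : R) ^ k * z₂) := by
          linear_combination (p : R) * h2 - hD (ψ₁^[k] y)
        refine ⟨z₁ * ψ₂ (ψ₁^[k] y) + ψ₁ (ψ₁^[k] x) * z₂, ?_, ?_⟩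
        · refine add_mem (mul_mem h1A ?_) (mul_mem (hψstab _ haA) h2A)
          rw [hψ₂b]
          exact add_mem (hψstab _ hbA)
            (mul_mem (natCast_mem A p) (mul_mem (pow_mem (natCast_mem A p) k) h2A))
        · rw [iterate_map_mul]
          have hDmul : δ₂ (ψ₁^[k] x * ψ₁^[k] y) - δ₁ (ψ₁^[k] x * ψ₁^[k] y)
              = (δ₂ (ψ₁^[k] x) - δ₁ (ψ₁^[k] x)) * ψ₂ (ψ₁^[k] y)
                + ψ₁ (ψ₁^[k] x) * (δ₂ (ψ₁^[k] y) - δ₁ (ψ₁^[k] y)) := by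
            apply hcan
            rw [hD, map_mul, map_mul]
            linear_combination (-(ψ₂ (ψ₁^[k] y))) * hD (ψ₁^[k] x)
              - ψ₁ (ψ₁^[k] x) * hD (ψ₁^[k] y)
          rw [hDmul, h1, h2]
          ring
  -- conclude
  have hδ₂A : ∀ y ∈ A, δ₂ y ∈ A := by
    intro y hy
    obtain ⟨z, hzA, hz⟩ := hDA y hy 0
    simp only [Function.iterate_zero, id_eq, pow_zero, one_mul] at hz
    have : δ₂ y = δ₁ y + z := by linear_combination hz
    rw [this]
    exact add_mem (hstab y hy) hzA
  have final : ∀ (i : ℕ), ∀ x ∈ I, δ₂^[i] (f x * u) ∈ A := by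
    intro i
    induction i with
    | zero => intro x hx; exact Algebra.subset_adjoin ⟨x, hx, 0, rfl⟩
    | succ i ih =>
        intro x hx
        rw [Function.iterate_succ_apply']
        exact hδ₂A _ (ih x hx)
  refine Algebra.adjoin_le ?_
  rintro y ⟨x, hx, i, rfl⟩
  exact final i x hx


/-- Let `B` be a `p`-torsion-free commutative ring with two Frobenius
lifts `φ₁, φ₂` (with `δ`-operators `δB₁, δB₂`) such that `δ₁(a) − δ₂(a) ∈ pB` for all
`a ∈ B`; extend everything to `B[1/p]`, giving `ψᵢ` and extended `δ`-operators `δᵢ`.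
Let `I ⊆ B` be an ideal containing `p`. Then the `B`-subalgebras of `B[1/p]`
`adjoin_B{ δ₁^i(x/p) : x ∈ I, i ≥ 0 }` and `adjoin_B{ δ₂^i(x/p) : x ∈ I, i ≥ 0 }`
are equal. -/
theorem stmt9 (p : ℕ) (hp : p.Prime) {B : Type*} [CommRing B]
    (hB : Function.Injective fun b : B => (p : B) * b)
    (φ₁ φ₂ : B →+* B) (δB₁ δB₂ : B → B)
    (hδB₁ : ∀ a : B, (p : B) * δB₁ a = φ₁ a - a ^ p)
    (hδB₂ : ∀ a : B, (p : B) * δB₂ a = φ₂ a - a ^ p)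
    (hdiff : ∀ a : B, ∃ c : B, δB₁ a - δB₂ a = (p : B) * c)
    (ψ₁ ψ₂ : Localization.Away (p : B) →+* Localization.Away (p : B))
    (hψ₁ : ∀ b : B, ψ₁ (algebraMap B (Localization.Away (p : B)) b)
        = algebraMap B (Localization.Away (p : B)) (φ₁ b))
    (hψ₂ : ∀ b : B, ψ₂ (algebraMap B (Localization.Away (p : B)) b)
        = algebraMap B (Localization.Away (p : B)) (φ₂ b))
    (δ₁ δ₂ : Localization.Away (p : B) → Localization.Away (p : B))
    (hδ₁ : ∀ y : Localization.Away (p : B), (p : Localization.Away (p : B)) * δ₁ y = ψ₁ y - y ^ p)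
    (hδ₂ : ∀ y : Localization.Away (p : B), (p : Localization.Away (p : B)) * δ₂ y = ψ₂ y - y ^ p)
    (I : Ideal B) (hI : (p : B) ∈ I) :
    Algebra.adjoin B {y : Localization.Away (p : B) | ∃ x ∈ I, ∃ i : ℕ,
        y = δ₁^[i] (algebraMap B (Localization.Away (p : B)) x *
          IsLocalization.Away.invSelf (S := Localization.Away (p : B)) (p : B))} =
      Algebra.adjoin B {y : Localization.Away (p : B) | ∃ x ∈ I, ∃ i : ℕ,
        y = δ₂^[i] (algebraMap B (Localization.Away (p : B)) x *
          IsLocalization.Away.invSelf (S := Localization.Away (p : B)) (p : B))} := by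
  have hpu : ((p : ℕ) : Localization.Away (p : B)) *
      IsLocalization.Away.invSelf (S := Localization.Away (p : B)) (p : B) = 1 := by
    have h := IsLocalization.Away.mul_invSelf (S := Localization.Away (p : B)) ((p : ℕ) : B)
    rwa [map_natCast] at h
  have hdiff2 : ∀ a : B, ∃ c : B, δB₂ a - δB₁ a = (p : B) * c := fun a => by
    obtain ⟨c, hc⟩ := hdiff a
    exact ⟨-c, by linear_combination -hc⟩
  apply le_antisymm
  · exact stmt9_aux p hp _ hpu hB φ₂ φ₁ δB₂ δB₁ hδB₂ hδB₁ hdiff2 ψ₂ ψ₁ hψ₂ hψ₁ δ₂ δ₁ hδ₂ hδ₁ I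
  · exact stmt9_aux p hp _ hpu hB φ₁ φ₂ δB₁ δB₂ hδB₁ hδB₂ hdiff ψ₁ ψ₂ hψ₁ hψ₂ δ₁ δ₂ hδ₁ hδ₂ I
end

section
/- Fix a prime p. Let A be a p-torsion-free commutative ring with a Frobenius lift φ and associated δ-operator δ, extended to A[1/p]. Let I ⊆ A be an ideal such that φ(I) ⊆ I and A/I is p-torsion free. Then the A-subalgebra of A[1/p] generated by { δ^i(x/p) : x ∈ I + pA, i ≥ 0 } is equal to the A-subalgebra of A[1/p] generated by { x^{p^m} / p^{1+p+⋯+p^m} : x ∈ I, m ≥ 0 }. -/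
section Stmt10Aux

variable {A R : Type*} [CommRing A] [CommRing R] [Algebra A R]

/-- Generator `x^{p^m}/p^{1+p+⋯+p^m}` of the right-hand side algebra. -/
noncomputable def stmt10g (p : ℕ) (q : R) (x : A) (m : ℕ) : R :=
  algebraMap A R x ^ p ^ m * q ^ (∑ j ∈ Finset.range (m + 1), p ^ j)

/-- Auxiliary element `x^{p^m}/p^{2+p+⋯+p^m}`. -/
noncomputable def stmt10h (p : ℕ) (q : R) (x : A) (m : ℕ) : R :=
  algebraMap A R x ^ p ^ m * q ^ ((∑ j ∈ Finset.range (m + 1), p ^ j) + 1)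

theorem stmt10g_def (p : ℕ) (q : R) (x : A) (m : ℕ) :
    stmt10g p q x m
      = algebraMap A R x ^ p ^ m * q ^ (∑ j ∈ Finset.range (m + 1), p ^ j) := rfl

theorem stmt10h_def (p : ℕ) (q : R) (x : A) (m : ℕ) :
    stmt10h p q x m
      = algebraMap A R x ^ p ^ m * q ^ ((∑ j ∈ Finset.range (m + 1), p ^ j) + 1) := rfl

/-- If `δ` maps the generating set into the adjoined algebra, the adjoined algebra is
`δ`-stable. -/
theorem stmt10_deltaStable {p : ℕ} (hp : p.Prime) (hpu : IsUnit (p : R))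
    (ψ : R →+* R) (δ : R → R) (hδ : ∀ y : R, (p : R) * δ y = ψ y - y ^ p)
    (δA : A → A) (hδalg : ∀ a : A, δ (algebraMap A R a) = algebraMap A R (δA a))
    (S : Set R) (hS : ∀ y ∈ S, δ y ∈ Algebra.adjoin A S)
    {y : R} (hy : y ∈ Algebra.adjoin A S) : δ y ∈ Algebra.adjoin A S := by
  have cancel : ∀ {u v : R}, (p : R) * u = (p : R) * v → u = v :=
    fun h => hpu.mul_left_cancel h
  have hψ : ∀ y : R, ψ y = y ^ p + (p : R) * δ y := fun y => by linear_combination - hδ y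
  induction hy using Algebra.adjoin_induction with
  | mem x hx => exact hS x hx
  | algebraMap a => rw [hδalg]; exact Subalgebra.algebraMap_mem _ _
  | add x y hx hy hdx hdy =>
      have hbin := add_pow_prime_eq hp x y
      have hE : δ (x + y) = δ x + δ y
          - x * y * ∑ k ∈ Finset.Ioo 0 p, x ^ (k - 1) * y ^ (p - k - 1) * ((p.choose k / p : ℕ) : R) := by
        apply cancel
        linear_combination hδ (x + y) + map_add ψ x y + hψ x + hψ y - hbin
      rw [hE]
      refine sub_mem (add_mem hdx hdy) (mul_mem (mul_mem hx hy) (Subalgebra.sum_mem _ fun k _ => ?_))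
      exact mul_mem (mul_mem (pow_mem hx _) (pow_mem hy _)) (natCast_mem _ _)
  | mul x y hx hy hdx hdy =>
      have hm : δ (x * y) = x ^ p * δ y + y ^ p * δ x + (p : R) * δ x * δ y := by
        apply cancel
        linear_combination hδ (x * y) + map_mul ψ x y + ψ y * hψ x
          + (x ^ p + (p : R) * δ x) * hψ y
      rw [hm]
      exact add_mem (add_mem (mul_mem (pow_mem hx p) hdy) (mul_mem (pow_mem hy p) hdx))
        (mul_mem (mul_mem (natCast_mem _ _) hdx) hdy)

theorem stmt10_aux {p : ℕ} (hp : p.Prime) (q : R) (hq : (p : R) * q = 1)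
    (φ : A →+* A) (δA : A → A)
    (hδA : ∀ a : A, (p : A) * δA a = φ a - a ^ p)
    (ψ : R →+* R)
    (hψφ : ∀ a : A, ψ (algebraMap A R a) = algebraMap A R (φ a))
    (δ : R → R) (hδ : ∀ y : R, (p : R) * δ y = ψ y - y ^ p)
    (I : Ideal A) (hφI : ∀ x ∈ I, φ x ∈ I)
    (hquot : ∀ a : A, (p : A) * a ∈ I → a ∈ I) :
    Algebra.adjoin A {y : R | ∃ x ∈ I ⊔ Ideal.span {(p : A)}, ∃ i : ℕ,
        y = δ^[i] (algebraMap A R x * q)} =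
      Algebra.adjoin A {y : R | ∃ x ∈ I, ∃ m : ℕ,
        y = (algebraMap A R x) ^ (p ^ m) * q ^ (∑ j ∈ Finset.range (m + 1), p ^ j)} := by
  have h2le : 2 ≤ p := hp.two_le
  have hpu : IsUnit (p : R) := IsUnit.of_mul_eq_one q hq
  have cancel : ∀ {u v : R}, (p : R) * u = (p : R) * v → u = v :=
    fun h => hpu.mul_left_cancel h
  -- basic facts
  have hq1 : ∀ k : ℕ, (p : R) * q ^ (k + 1) = q ^ k := by
    intro k
    rw [pow_succ, ← mul_assoc, mul_comm ((p : R)) (q ^ k), mul_assoc, hq, mul_one]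
  have hψq : ψ q = q := by
    have h1 : ψ ((p : R) * q) = 1 := by rw [hq, map_one]
    rw [map_mul, map_natCast] at h1
    exact cancel (by rw [h1, hq])
  have hδalg : ∀ a : A, δ (algebraMap A R a) = algebraMap A R (δA a) := by
    intro a
    apply cancel
    rw [hδ, hψφ, ← map_pow, ← map_sub, ← hδA a, map_mul, map_natCast]
  have hδI : ∀ x ∈ I, δA x ∈ I := by
    intro x hx
    refine hquot _ ?_
    rw [hδA]
    exact I.sub_mem (hφI x hx) (Ideal.pow_mem_of_mem I hx p hp.pos)
  have hsrec : ∀ m : ℕ, ∑ j ∈ Finset.range (m + 2), p ^ j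
      = p * (∑ j ∈ Finset.range (m + 1), p ^ j) + 1 := by
    intro m
    rw [Finset.sum_range_succ' (fun j => p ^ j) (m + 1)]
    simp [pow_succ', ← Finset.mul_sum]
  -- generator identities
  have hgel0 : ∀ x : A, stmt10g p q x 0 = algebraMap A R x * q := by
    intro x; simp [stmt10g]
  have hgelpow : ∀ (x : A) (m : ℕ),
      stmt10g p q x m ^ p = (p : R) * stmt10g p q x (m + 1) := by
    intro x m
    simp only [stmt10g]
    rw [mul_pow, ← pow_mul, ← pow_mul, ← pow_succ, hsrec m,
      mul_comm p (∑ j ∈ Finset.range (m + 1), p ^ j), ← hq1 ((∑ j ∈ Finset.range (m + 1), p ^ j) * p)]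
    ring
  have hψgel : ∀ (x : A) (m : ℕ),
      ψ (stmt10g p q x m) = (p : R) * stmt10h p q (φ x) m := by
    intro x m
    simp only [stmt10g, stmt10h, map_mul, map_pow, hψq, hψφ]
    rw [← hq1 (∑ j ∈ Finset.range (m + 1), p ^ j)]
    ring
  have hδgel : ∀ (x : A) (m : ℕ),
      δ (stmt10g p q x m) = stmt10h p q (φ x) m - stmt10g p q x (m + 1) := by
    intro x m
    apply cancel
    rw [hδ, hψgel, hgelpow]
    ring
  have hqsmall : (p : R) ^ (p - 2) * q ^ (p - 2) = 1 := by
    rw [← mul_pow, hq, one_pow]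
  have hqp2 : (p : R) ^ (p - 2) * q ^ p = q ^ 2 := by
    have e : p - 2 + 2 = p := by omega
    calc (p : R) ^ (p - 2) * q ^ p = (p : R) ^ (p - 2) * q ^ (p - 2 + 2) := by rw [e]
      _ = ((p : R) ^ (p - 2) * q ^ (p - 2)) * q ^ 2 := by ring
      _ = q ^ 2 := by rw [hqsmall, one_mul]
  have hhel0 : ∀ x : A, stmt10h p q (φ x) 0
      = (p : R) ^ (p - 2) * (algebraMap A R x * q) ^ p + algebraMap A R (δA x) * q := by
    intro x
    have hx : φ x = x ^ p + (p : A) * δA x := by linear_combination - hδA x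
    simp only [stmt10h, pow_zero, pow_one, hx, map_add, map_mul, map_natCast, map_pow]
    have hs0 : (∑ j ∈ Finset.range (0 + 1), p ^ j) + 1 = 2 := by simp
    rw [hs0]
    linear_combination (- (algebraMap A R x ^ p)) * hqp2 + algebraMap A R (δA x) * hq1 1
  have hhelsucc : ∀ (x : A) (m : ℕ),
      stmt10h p q x (m + 1) = (p : R) ^ (p - 2) * stmt10h p q x m ^ p := by
    intro x m
    obtain ⟨k, rfl⟩ : ∃ k, p = k + 2 := ⟨p - 2, by omega⟩
    simp only [stmt10h]
    have e2 : ((∑ j ∈ Finset.range (m + 1), (k + 2) ^ j) + 1) * (k + 2)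
        = ((∑ j ∈ Finset.range (m + 2), (k + 2) ^ j) + 1) + k := by
      rw [hsrec m]; ring
    rw [mul_pow, ← pow_mul, ← pow_mul, ← pow_succ, e2, pow_add]
    have ek : k + 2 - 2 = k := by omega
    rw [ek] at hqsmall ⊢
    linear_combination (- (algebraMap A R x ^ (k + 2) ^ (m + 1)
      * q ^ ((∑ j ∈ Finset.range (m + 2), (k + 2) ^ j) + 1))) * hqsmall
  -- membership of the h-elements in any subalgebra containing the degree-0 generators
  have hhelmem : ∀ T : Subalgebra A R, (∀ x ∈ I, algebraMap A R x * q ∈ T) →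
      ∀ x ∈ I, ∀ m : ℕ, stmt10h p q (φ x) m ∈ T := by
    intro T hT x hx m
    induction m with
    | zero =>
        rw [hhel0 x]
        exact add_mem (mul_mem (pow_mem (natCast_mem T p) _) (pow_mem (hT x hx) p))
          (hT _ (hδI x hx))
    | succ m ih =>
        rw [hhelsucc]
        exact mul_mem (pow_mem (natCast_mem T p) _) (pow_mem ih p)
  -- the two subalgebras
  set CB := Algebra.adjoin A {y : R | ∃ x ∈ I ⊔ Ideal.span {(p : A)}, ∃ i : ℕ,
      y = δ^[i] (algebraMap A R x * q)} with hCB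
  set CC := Algebra.adjoin A {y : R | ∃ x ∈ I, ∃ m : ℕ,
      y = (algebraMap A R x) ^ (p ^ m) * q ^ (∑ j ∈ Finset.range (m + 1), p ^ j)} with hCC
  have baseC : ∀ x ∈ I, algebraMap A R x * q ∈ CC := by
    intro x hx
    exact Algebra.subset_adjoin ⟨x, hx, 0, (hgel0 x).symm⟩
  have baseB : ∀ x ∈ I, algebraMap A R x * q ∈ CB := by
    intro x hx
    exact Algebra.subset_adjoin ⟨x, Ideal.mem_sup_left hx, 0, rfl⟩
  have hSC : ∀ y ∈ {y : R | ∃ x ∈ I, ∃ m : ℕ,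
      y = (algebraMap A R x) ^ (p ^ m) * q ^ (∑ j ∈ Finset.range (m + 1), p ^ j)}, δ y ∈ CC := by
    rintro y ⟨x, hx, m, rfl⟩
    rw [← stmt10g_def, hδgel x m]
    exact sub_mem (hhelmem CC baseC x hx m) (Algebra.subset_adjoin ⟨x, hx, m + 1, rfl⟩)
  have hSB : ∀ y ∈ {y : R | ∃ x ∈ I ⊔ Ideal.span {(p : A)}, ∃ i : ℕ,
      y = δ^[i] (algebraMap A R x * q)}, δ y ∈ CB := by
    rintro y ⟨x, hx, i, rfl⟩
    exact Algebra.subset_adjoin ⟨x, hx, i + 1, (Function.iterate_succ_apply' δ i _).symm⟩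
  have stabC : ∀ {y : R}, y ∈ CC → δ y ∈ CC := fun hy =>
    stmt10_deltaStable hp hpu ψ δ hδ δA hδalg _ hSC hy
  have stabB : ∀ {y : R}, y ∈ CB → δ y ∈ CB := fun hy =>
    stmt10_deltaStable hp hpu ψ δ hδ δA hδalg _ hSB hy
  apply le_antisymm
  · -- B ≤ C
    rw [hCB]
    apply Algebra.adjoin_le
    rintro y ⟨x, hx, i, rfl⟩
    obtain ⟨a, haI, b, hb, rfl⟩ := Submodule.mem_sup.mp hx
    obtain ⟨c, rfl⟩ := Ideal.mem_span_singleton'.mp hb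
    have base0 : algebraMap A R (a + c * (p : A)) * q ∈ CC := by
      have he : algebraMap A R (a + c * (p : A)) * q
          = algebraMap A R a * q + algebraMap A R c := by
        rw [map_add, map_mul, map_natCast]
        linear_combination algebraMap A R c * hq
      rw [he]
      exact add_mem (baseC a haI) (Subalgebra.algebraMap_mem CC c)
    induction i with
    | zero => simpa using base0
    | succ i ih =>
        rw [Function.iterate_succ_apply']
        exact stabC ih
  · -- C ≤ B
    rw [hCC]
    apply Algebra.adjoin_le
    rintro y ⟨x, hx, m, rfl⟩
    rw [← stmt10g_def]
    induction m with
    | zero =>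
        exact Algebra.subset_adjoin ⟨x, Ideal.mem_sup_left hx, 0, hgel0 x⟩
    | succ m ih =>
        have h' : stmt10g p q x (m + 1)
            = stmt10h p q (φ x) m - δ (stmt10g p q x m) := by
          linear_combination hδgel x m
        rw [h']
        exact sub_mem (hhelmem CB baseB x hx m) (stabB ih)

end Stmt10Aux


/-- Let `A` be a `p`-torsion-free commutative ring with a Frobenius lift
`φ` (with `δ`-operator `δA`), extended to `A[1/p]` as `ψ` with extended `δ`-operator `δ`.
Let `I ⊆ A` be an ideal with `φ(I) ⊆ I` and `A/I` `p`-torsion free. Then the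
`A`-subalgebra of `A[1/p]` generated by `{ δ^i(x/p) : x ∈ I + pA, i ≥ 0 }` equals the
`A`-subalgebra generated by `{ x^{p^m} / p^{1+p+⋯+p^m} : x ∈ I, m ≥ 0 }`. -/
theorem stmt10 (p : ℕ) (hp : p.Prime) {A : Type*} [CommRing A]
    (hA : Function.Injective fun a : A => (p : A) * a)
    (φ : A →+* A) (δA : A → A)
    (hδA : ∀ a : A, (p : A) * δA a = φ a - a ^ p)
    (ψ : Localization.Away (p : A) →+* Localization.Away (p : A))
    (hψ : ∀ a : A, ψ (algebraMap A (Localization.Away (p : A)) a)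
        = algebraMap A (Localization.Away (p : A)) (φ a))
    (δ : Localization.Away (p : A) → Localization.Away (p : A))
    (hδ : ∀ y : Localization.Away (p : A), (p : Localization.Away (p : A)) * δ y = ψ y - y ^ p)
    (I : Ideal A) (hφI : ∀ x ∈ I, φ x ∈ I)
    (hquot : ∀ a : A, (p : A) * a ∈ I → a ∈ I) :
    Algebra.adjoin A {y : Localization.Away (p : A) | ∃ x ∈ I ⊔ Ideal.span {(p : A)}, ∃ i : ℕ,
        y = δ^[i] (algebraMap A (Localization.Away (p : A)) x *
          IsLocalization.Away.invSelf (S := Localization.Away (p : A)) (p : A))} =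
      Algebra.adjoin A {y : Localization.Away (p : A) | ∃ x ∈ I, ∃ m : ℕ,
        y = (algebraMap A (Localization.Away (p : A)) x) ^ (p ^ m) *
          (IsLocalization.Away.invSelf (S := Localization.Away (p : A)) (p : A)) ^
            (∑ j ∈ Finset.range (m + 1), p ^ j)} := by
  have hq : (p : Localization.Away (p : A)) *
      IsLocalization.Away.invSelf (S := Localization.Away (p : A)) (p : A) = 1 := by
    have := IsLocalization.Away.mul_invSelf (S := Localization.Away (p : A)) (p : A)
    rwa [map_natCast] at this
  exact stmt10_aux hp _ hq φ δA hδA ψ hψ δ hδ I hφI hquot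
end

section
/- Fix a prime p. Let R be a p-torsion-free commutative ring with a Frobenius lift φ and associated δ-operator δ, extended to R[1/p]. Let I ⊆ R be an ideal generated by a subset G ⊆ R. Then the R-subalgebra of R[1/p] generated by { δ^j(x/p) : x ∈ I, j ≥ 0 } equals the R-subalgebra of R[1/p] generated by { δ^j(g/p) : g ∈ G, j ≥ 0 }. -/
/-- Auxiliary: if `p` is a prime that is a unit in `K`, `δ` is the `δ`-operator of a
Frobenius lift `ψ`, `T ⊆ K` is closed under `δ`, and `δ` maps the image of `R` into
`Algebra.adjoin R T`, then `Algebra.adjoin R T` is closed under `δ`. -/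
theorem aux_delta_closed {p : ℕ} (hp : p.Prime) {K : Type*} [CommRing K]
    {R : Type*} [CommRing R] [Algebra R K]
    (hpu : IsUnit (p : K))
    (ψ : K →+* K) (δ : K → K)
    (hδ : ∀ y : K, (p : K) * δ y = ψ y - y ^ p)
    (T : Set K) (hT : ∀ t ∈ T, δ t ∈ T)
    (hδalg : ∀ r : R, δ (algebraMap R K r) ∈ Algebra.adjoin R T) :
    ∀ x ∈ Algebra.adjoin R T, δ x ∈ Algebra.adjoin R T := by
  intro x hx
  have cancel : ∀ a b : K, (p : K) * a = (p : K) * b → a = b := fun a b h =>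
    hpu.mul_left_cancel h
  have epsi : ∀ y : K, ψ y = y ^ p + (p : K) * δ y := by
    intro y; linear_combination -(hδ y)
  induction hx using Algebra.adjoin_induction with
  | mem t ht => exact Algebra.subset_adjoin (hT t ht)
  | algebraMap r => exact hδalg r
  | add a b ha hb iha ihb =>
      have key : δ (a + b) = δ a + δ b
          - ∑ k ∈ Finset.Ioo 0 p, a ^ k * b ^ (p - k) * ((p.choose k / p : ℕ) : K) := by
        apply cancel
        have hs : a * b * ∑ k ∈ Finset.Ioo 0 p, a ^ (k - 1) * b ^ (p - k - 1) * ((p.choose k / p : ℕ) : K)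
            = ∑ k ∈ Finset.Ioo 0 p, a ^ k * b ^ (p - k) * ((p.choose k / p : ℕ) : K) := by
          rw [Finset.mul_sum]
          refine Finset.sum_congr rfl fun k hk => ?_
          obtain ⟨h1, h2⟩ := Finset.mem_Ioo.mp hk
          obtain ⟨i, rfl⟩ : ∃ i, k = i + 1 := ⟨k - 1, by omega⟩
          obtain ⟨j, hj⟩ : ∃ j, p - (i + 1) = j + 1 := ⟨p - (i + 1) - 1, by omega⟩
          rw [hj]
          simp only [Nat.add_sub_cancel]
          ring
        rw [hδ (a + b), map_add, epsi a, epsi b, add_pow_prime_eq hp a b]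
        linear_combination -(p : K) * hs
      rw [key]
      refine sub_mem (add_mem iha ihb) (Subalgebra.sum_mem _ fun k _ => ?_)
      exact mul_mem (mul_mem (pow_mem ha k) (pow_mem hb _)) (Subalgebra.natCast_mem _ _)
  | mul a b ha hb iha ihb =>
      have key : δ (a * b) = a ^ p * δ b + b ^ p * δ a + (p : K) * (δ a * δ b) := by
        apply cancel
        rw [hδ (a * b), map_mul, epsi a, epsi b, mul_pow]
        ring
      rw [key]
      exact add_mem (add_mem (mul_mem (pow_mem ha p) ihb) (mul_mem (pow_mem hb p) iha))
        (mul_mem (Subalgebra.natCast_mem _ _) (mul_mem iha ihb))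

/-- Let `R` be a `p`-torsion-free commutative ring with a Frobenius lift
`φ` (with `δ`-operator `δR`), extended to `R[1/p]` as `ψ` with extended `δ`-operator `δ`.
Let `I ⊆ R` be the ideal generated by a subset `G ⊆ R`. Then the `R`-subalgebra of
`R[1/p]` generated by `{ δ^j(x/p) : x ∈ I, j ≥ 0 }` equals the `R`-subalgebra generated
by `{ δ^j(g/p) : g ∈ G, j ≥ 0 }`. -/
theorem stmt12 (p : ℕ) (hp : p.Prime) {R : Type*} [CommRing R]
    (hR : Function.Injective fun a : R => (p : R) * a)
    (φ : R →+* R) (δR : R → R)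
    (hδR : ∀ a : R, (p : R) * δR a = φ a - a ^ p)
    (ψ : Localization.Away (p : R) →+* Localization.Away (p : R))
    (hψ : ∀ a : R, ψ (algebraMap R (Localization.Away (p : R)) a)
        = algebraMap R (Localization.Away (p : R)) (φ a))
    (δ : Localization.Away (p : R) → Localization.Away (p : R))
    (hδ : ∀ y : Localization.Away (p : R), (p : Localization.Away (p : R)) * δ y = ψ y - y ^ p)
    (G : Set R) :
    Algebra.adjoin R {y : Localization.Away (p : R) | ∃ x ∈ Ideal.span G, ∃ j : ℕ,
        y = δ^[j] (algebraMap R (Localization.Away (p : R)) x *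
          IsLocalization.Away.invSelf (S := Localization.Away (p : R)) (p : R))} =
      Algebra.adjoin R {y : Localization.Away (p : R) | ∃ g ∈ G, ∃ j : ℕ,
        y = δ^[j] (algebraMap R (Localization.Away (p : R)) g *
          IsLocalization.Away.invSelf (S := Localization.Away (p : R)) (p : R))} := by
  set f := algebraMap R (Localization.Away (p : R)) with hf
  set u := IsLocalization.Away.invSelf (S := Localization.Away (p : R)) (p : R) with hu
  have hfp : (p : Localization.Away (p : R)) = f (p : R) := (map_natCast f p).symm
  have hpu : IsUnit (p : Localization.Away (p : R)) := by
    rw [hfp]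
    exact IsUnit.of_mul_eq_one u (IsLocalization.Away.mul_invSelf (p : R))
  have cancel : ∀ a b : Localization.Away (p : R),
      (p : Localization.Away (p : R)) * a = (p : Localization.Away (p : R)) * b → a = b :=
    fun a b h => hpu.mul_left_cancel h
  -- δ commutes with the algebra map
  have hδalg : ∀ r : R, δ (f r) = f (δR r) := by
    intro r
    apply cancel
    rw [hδ (f r), hψ r, hfp, ← map_mul, hδR, map_sub, map_pow]
  -- the generating set on the RHS and its closure under δ
  set T : Set (Localization.Away (p : R)) :=
    {y : Localization.Away (p : R) | ∃ g ∈ G, ∃ j : ℕ, y = δ^[j] (f g * u)} with hT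
  have hTclosed : ∀ t ∈ T, δ t ∈ T := by
    rintro t ⟨g, hg, j, rfl⟩
    exact ⟨g, hg, j + 1, (Function.iterate_succ_apply' δ j _).symm⟩
  have hAclosed : ∀ x ∈ Algebra.adjoin R T, δ x ∈ Algebra.adjoin R T :=
    aux_delta_closed hp hpu ψ δ hδ T hTclosed
      (fun r => by rw [hδalg r]; exact Subalgebra.algebraMap_mem _ _)
  have hiter : ∀ (j : ℕ) (x : Localization.Away (p : R)),
      x ∈ Algebra.adjoin R T → δ^[j] x ∈ Algebra.adjoin R T := by
    intro j
    induction j with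
    | zero => exact fun x hx => hx
    | succ n ih =>
        intro x hx
        rw [Function.iterate_succ_apply' δ n x]
        exact hAclosed _ (ih x hx)
  apply le_antisymm
  · apply Algebra.adjoin_le
    rintro y ⟨x, hx, j, rfl⟩
    refine hiter j _ ?_
    refine Submodule.span_induction (p := fun x _ => f x * u ∈ Algebra.adjoin R T)
      ?_ ?_ ?_ ?_ hx
    · intro g hg
      exact Algebra.subset_adjoin ⟨g, hg, 0, rfl⟩
    · show f 0 * u ∈ Algebra.adjoin R T
      rw [map_zero, zero_mul]; exact zero_mem _
    · intro a b _ _ ha hb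
      show f (a + b) * u ∈ Algebra.adjoin R T
      rw [map_add, add_mul]; exact add_mem ha hb
    · intro r a _ ha
      show f (r • a) * u ∈ Algebra.adjoin R T
      rw [smul_eq_mul, map_mul, mul_assoc]
      exact mul_mem (Subalgebra.algebraMap_mem _ r) ha
  · apply Algebra.adjoin_mono
    rintro y ⟨g, hg, j, rfl⟩
    exact ⟨g, Ideal.subset_span hg, j, rfl⟩
end

section
/- Fix a prime p. Let R be a p-torsion-free commutative ring with a Frobenius lift φ and associated δ-operator δ, extended to R[1/p]. Let I ⊆ R be an ideal and S ⊆ R a multiplicative subset with φ(S) ⊆ S. Then S^{−1}R is p-torsion free, φ extends uniquely to a Frobenius lift φ_S on S^{−1}R with δ-operator δ_S, and inside (S^{−1}R)[1/p] the S^{−1}R-subalgebra generated by the image of the R-subalgebra adjoin_R{ δ^i(x/p) : x ∈ I, i ≥ 0 } of R[1/p] equals the S^{−1}R-subalgebra generated by { δ_S^i(y/p) : y ∈ S^{−1}I, i ≥ 0 }, where S^{−1}I denotes the image ideal of I in S^{−1}R. -/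
section Aux

variable {L : Type*} [CommRing L]

lemma pcancel {p : ℕ} (hpu : IsUnit (p : L)) {a b : L} (h : (p : L) * a = (p : L) * b) :
    a = b := hpu.mul_left_cancel h

lemma closure_delta_stable {p : ℕ} (hp : p.Prime) (hpu : IsUnit (p : L))
    (ψ : L →+* L) (δ : L → L) (hδ : ∀ y : L, (p : L) * δ y = ψ y - y ^ p)
    (T : Set L) (hT : ∀ t ∈ T, δ t ∈ Subring.closure T) :
    ∀ y ∈ Subring.closure T, δ y ∈ Subring.closure T := by
  have hp0 : p ≠ 0 := hp.ne_zero
  have hψ : ∀ y : L, ψ y = y ^ p + (p : L) * δ y := fun y => by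
    linear_combination - hδ y
  have hδ0 : δ 0 = 0 := pcancel hpu (by rw [hδ]; simp [zero_pow hp0])
  have hδ1 : δ 1 = 0 := pcancel hpu (by rw [hδ]; simp)
  have hδmul : ∀ u v : L, δ (u * v) = ψ u * δ v + δ u * v ^ p := by
    intro u v
    refine pcancel hpu ?_
    have h3 := hδ (u * v)
    rw [map_mul, mul_pow] at h3
    calc (p : L) * δ (u * v) = ψ u * ψ v - u ^ p * v ^ p := h3
      _ = ψ u * ((p : L) * δ v) + ((p : L) * δ u) * v ^ p := by
          rw [hδ u, hδ v]; ring
      _ = (p : L) * (ψ u * δ v + δ u * v ^ p) := by ring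
  have hδneg1 : δ (-1 : L) = 0 ∨ δ (-1 : L) = -1 := by
    rcases hp.eq_two_or_odd' with h2 | hodd
    · right
      refine pcancel hpu ?_
      rw [hδ, map_neg, map_one, h2]
      norm_num
    · left
      refine pcancel hpu ?_
      rw [hδ, map_neg, map_one, hodd.neg_one_pow]
      ring
  have hδneg : ∀ u : L, δ (-u) = ψ (-1) * δ u + δ (-1) * u ^ p := fun u => by
    rw [← hδmul, neg_one_mul]
  have hδadd : ∀ u v : L, δ (u + v) = δ u + δ v -
      ∑ k ∈ Finset.Ioo 0 p, u ^ k * v ^ (p - k) * ((p.choose k / p : ℕ) : L) := by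
    intro u v
    set W : L := ∑ k ∈ Finset.Ioo 0 p, u ^ k * v ^ (p - k) * ((p.choose k / p : ℕ) : L) with hW
    have hpW : (p : L) * W = ∑ k ∈ Finset.Ioo 0 p, u ^ k * v ^ (p - k) * (p.choose k : L) := by
      rw [hW, Finset.mul_sum]
      refine Finset.sum_congr rfl fun k hk => ?_
      rw [Finset.mem_Ioo] at hk
      have hdvd : p ∣ p.choose k := Nat.Prime.dvd_choose_self hp (by omega) hk.2
      calc (p : L) * (u ^ k * v ^ (p - k) * ((p.choose k / p : ℕ) : L))
          = u ^ k * v ^ (p - k) * ((p : L) * ((p.choose k / p : ℕ) : L)) := by ring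
        _ = u ^ k * v ^ (p - k) * (p.choose k : L) := by
            rw [← Nat.cast_mul, Nat.mul_div_cancel' hdvd]
    have hsum : ∑ k ∈ Finset.range (p + 1), u ^ k * v ^ (p - k) * (p.choose k : L)
        = v ^ p + (u ^ p + ∑ k ∈ Finset.Ioo 0 p, u ^ k * v ^ (p - k) * (p.choose k : L)) := by
      have h0 : (0 : ℕ) ∈ Finset.range (p + 1) := by simp
      rw [← Finset.add_sum_erase _ _ h0]
      have hpm : p ∈ (Finset.range (p + 1)).erase 0 := by
        simp [Finset.mem_erase, hp0]
      rw [← Finset.add_sum_erase _ _ hpm]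
      have he : ((Finset.range (p + 1)).erase 0).erase p = Finset.Ioo 0 p := by
        ext k
        simp only [Finset.mem_erase, Finset.mem_range, Finset.mem_Ioo]
        omega
      rw [he]
      simp
    refine pcancel hpu ?_
    rw [hδ, map_add, add_pow, hsum]
    have hu := hδ u
    have hv := hδ v
    linear_combination - hu - hv + hpW
  intro y hy
  induction hy using Subring.closure_induction with
  | mem t ht => exact hT t ht
  | zero => rw [hδ0]; exact zero_mem _
  | one => rw [hδ1]; exact zero_mem _
  | add u v hu hv du dv =>
      rw [hδadd]
      refine sub_mem (add_mem du dv) (Subring.sum_mem _ fun k _ => ?_)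
      exact mul_mem (mul_mem (pow_mem hu k) (pow_mem hv (p - k))) (natCast_mem _ _)
  | neg u hu du =>
      rw [hδneg, map_neg, map_one, neg_one_mul]
      refine add_mem (neg_mem du) (mul_mem ?_ (pow_mem hu p))
      rcases hδneg1 with h | h <;> rw [h]
      · exact zero_mem _
      · exact neg_mem (one_mem _)
  | mul u v hu hv du dv =>
      rw [hδmul]
      refine add_mem (mul_mem ?_ dv) (mul_mem du (pow_mem hv p))
      rw [hψ u]
      exact add_mem (pow_mem hu p) (mul_mem (natCast_mem _ _) du)

lemma closure_delta_iter {p : ℕ} (hp : p.Prime) (hpu : IsUnit (p : L))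
    (ψ : L →+* L) (δ : L → L) (hδ : ∀ y : L, (p : L) * δ y = ψ y - y ^ p)
    (T : Set L) (hT : ∀ t ∈ T, δ t ∈ Subring.closure T) :
    ∀ (i : ℕ) (y : L), y ∈ Subring.closure T → δ^[i] y ∈ Subring.closure T := by
  intro i
  induction i with
  | zero => intro y hy; simpa using hy
  | succ n ih =>
      intro y hy
      rw [Function.iterate_succ_apply']
      exact closure_delta_stable hp hpu ψ δ hδ T hT _ (ih y hy)

end Aux

/-- The canonical ring map `R[1/p] → (S⁻¹R)[1/p]` induced by `R → S⁻¹R`. -/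
noncomputable def canMap (p : ℕ) {R : Type*} [CommRing R] (S : Submonoid R) :
    Localization.Away (p : R) →+* Localization.Away (p : Localization S) :=
  IsLocalization.Away.lift (S := Localization.Away (p : R)) (p : R)
    (g := (algebraMap (Localization S) (Localization.Away (p : Localization S))).comp
      (algebraMap R (Localization S)))
    (by
      have h : ((algebraMap (Localization S) (Localization.Away (p : Localization S))).comp
          (algebraMap R (Localization S))) ((p : R)) =
          algebraMap (Localization S) (Localization.Away (p : Localization S))
            ((p : Localization S)) := by
        simp
      rw [h]
      exact IsLocalization.Away.algebraMap_isUnit (p : Localization S))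

/-- Let `R` be a `p`-torsion-free commutative ring with a Frobenius lift
`φ` (with `δ`-operator `δR`), extended to `R[1/p]` as `ψ` with extended `δ`-operator `δ`.
Let `I ⊆ R` be an ideal and `S ⊆ R` a multiplicative subset with `φ(S) ⊆ S`. Then `S⁻¹R`
is `p`-torsion free, `φ` extends uniquely to a ring endomorphism `φ_S` of `S⁻¹R`; any such
extension is a Frobenius lift, and for its `δ`-operator (extended to `(S⁻¹R)[1/p]` via an
extension `ψ_S` with `δ`-operator `δ_S`), the `S⁻¹R`-subalgebra of `(S⁻¹R)[1/p]` generated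
by the image of `adjoin_R{ δ^i(x/p) : x ∈ I, i ≥ 0 }` equals the `S⁻¹R`-subalgebra
generated by `{ δ_S^i(y/p) : y ∈ S⁻¹I, i ≥ 0 }`. -/
theorem stmt13 (p : ℕ) (hp : p.Prime) {R : Type*} [CommRing R]
    (hR : Function.Injective fun a : R => (p : R) * a)
    (φ : R →+* R) (δR : R → R)
    (hδR : ∀ a : R, (p : R) * δR a = φ a - a ^ p)
    (ψ : Localization.Away (p : R) →+* Localization.Away (p : R))
    (hψ : ∀ a : R, ψ (algebraMap R (Localization.Away (p : R)) a)
        = algebraMap R (Localization.Away (p : R)) (φ a))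
    (δ : Localization.Away (p : R) → Localization.Away (p : R))
    (hδ : ∀ y : Localization.Away (p : R), (p : Localization.Away (p : R)) * δ y = ψ y - y ^ p)
    (I : Ideal R) (S : Submonoid R) (hS : ∀ s ∈ S, φ s ∈ S) :
    (Function.Injective fun a : Localization S => (p : Localization S) * a)
    ∧ (∃! φS : Localization S →+* Localization S,
        ∀ r : R, φS (algebraMap R (Localization S) r) = algebraMap R (Localization S) (φ r))
    ∧ (∀ φS : Localization S →+* Localization S,
        (∀ r : R, φS (algebraMap R (Localization S) r) = algebraMap R (Localization S) (φ r)) →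
        ((∀ a : Localization S, ∃ b : Localization S, φS a - a ^ p = (p : Localization S) * b)
        ∧ ∀ ψS : Localization.Away (p : Localization S) →+* Localization.Away (p : Localization S),
            (∀ a : Localization S,
              ψS (algebraMap (Localization S) (Localization.Away (p : Localization S)) a)
                = algebraMap (Localization S) (Localization.Away (p : Localization S)) (φS a)) →
            ∀ δS : Localization.Away (p : Localization S) → Localization.Away (p : Localization S),
              (∀ y : Localization.Away (p : Localization S),
                (p : Localization.Away (p : Localization S)) * δS y = ψS y - y ^ p) →
              Algebra.adjoin (Localization S)
                  (⇑(canMap p S) '' (Algebra.adjoin R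
                    {y : Localization.Away (p : R) | ∃ x ∈ I, ∃ i : ℕ,
                      y = δ^[i] (algebraMap R (Localization.Away (p : R)) x *
                        IsLocalization.Away.invSelf (S := Localization.Away (p : R)) (p : R))} :
                    Set (Localization.Away (p : R))))
                = Algebra.adjoin (Localization S)
                  {y : Localization.Away (p : Localization S) |
                    ∃ z ∈ I.map (algebraMap R (Localization S)), ∃ i : ℕ,
                      y = δS^[i] (algebraMap (Localization S)
                          (Localization.Away (p : Localization S)) z *
                        IsLocalization.Away.invSelf
                          (S := Localization.Away (p : Localization S)) (p : Localization S))})) := by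
  -- abbreviations (only as `have`-style facts; types written out)
  have hinj : Function.Injective fun a : Localization S => (p : Localization S) * a := by
    intro a b hab
    have hab' : (p : Localization S) * a = (p : Localization S) * b := hab
    have hd : (p : Localization S) * (a - b) = 0 := by rw [mul_sub, hab', sub_self]
    obtain ⟨⟨r, s⟩, hrs⟩ := IsLocalization.mk'_surjective S (a - b)
    rw [← hrs] at hd
    have h1 : algebraMap R (Localization S) ((p : ℕ) * r) = 0 := by
      have h := congrArg (· * algebraMap R (Localization S) (s : R)) hd
      simp only [zero_mul] at h
      rw [mul_assoc, IsLocalization.mk'_spec] at h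
      rw [map_mul, map_natCast]
      exact h
    obtain ⟨m, hm⟩ := (IsLocalization.map_eq_zero_iff S _ _).mp h1
    have hr0 : (m : R) * r = 0 := by
      apply hR
      show (p : R) * ((m : R) * r) = (p : R) * 0
      rw [mul_zero]
      linear_combination hm
    have h2 : algebraMap R (Localization S) (m : R) * algebraMap R (Localization S) r
        = algebraMap R (Localization S) (m : R) * 0 := by
      rw [mul_zero, ← map_mul, hr0, map_zero]
    have hmu : IsUnit (algebraMap R (Localization S) (m : R)) := IsLocalization.map_units _ m
    have hr : algebraMap R (Localization S) r = 0 := hmu.mul_left_cancel h2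
    have hsu : IsUnit (algebraMap R (Localization S) (s : R)) := IsLocalization.map_units _ s
    have h3 : algebraMap R (Localization S) (s : R) * (a - b)
        = algebraMap R (Localization S) (s : R) * 0 := by
      rw [mul_zero, mul_comm, ← hrs, IsLocalization.mk'_spec, hr]
    have : a - b = 0 := hsu.mul_left_cancel h3
    exact sub_eq_zero.mp this
  refine ⟨hinj, ?_, ?_⟩
  · -- unique extension of φ
    have hunit : ∀ s : S, IsUnit (((algebraMap R (Localization S)).comp φ) s) := fun s =>
      IsLocalization.map_units (Localization S) ⟨φ s, hS s s.2⟩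
    refine ⟨IsLocalization.lift hunit, fun r => IsLocalization.lift_eq hunit r, ?_⟩
    intro ψ' hψ'
    refine IsLocalization.ringHom_ext S (RingHom.ext fun r => ?_)
    simp only [RingHom.comp_apply]
    rw [hψ' r, IsLocalization.lift_eq]
    rfl
  · intro φS hφS
    -- Frobenius lift property for φS
    have hfrob : ∀ a : Localization S, ∃ b : Localization S,
        φS a - a ^ p = (p : Localization S) * b := by
      intro a
      obtain ⟨⟨r, s⟩, rfl⟩ := IsLocalization.mk'_surjective S a
      have hsP : (s : R) ^ p ∈ S := pow_mem s.2 p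
      set t : S := ⟨φ s * (s : R) ^ p, S.mul_mem (hS s s.2) hsP⟩ with ht
      refine ⟨IsLocalization.mk' (Localization S) (δR r * (s : R) ^ p - r ^ p * δR s) t, ?_⟩
      have hu : IsUnit (algebraMap R (Localization S) (t : R)) := IsLocalization.map_units _ t
      refine hu.mul_left_cancel ?_
      have h2 : IsLocalization.mk' (Localization S) r s * algebraMap R (Localization S) (s : R)
          = algebraMap R (Localization S) r := IsLocalization.mk'_spec _ r s
      have h1 : φS (IsLocalization.mk' (Localization S) r s)
          * algebraMap R (Localization S) (φ s) = algebraMap R (Localization S) (φ r) := by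
        have h := congrArg φS h2
        rw [map_mul, hφS, hφS] at h
        exact h
      have hmulp : (IsLocalization.mk' (Localization S) r s) ^ p
          * algebraMap R (Localization S) ((s : R) ^ p)
          = algebraMap R (Localization S) (r ^ p) := by
        rw [map_pow, ← mul_pow, h2, map_pow]
      have h3 : IsLocalization.mk' (Localization S) (δR r * (s : R) ^ p - r ^ p * δR s) t
          * (algebraMap R (Localization S) (φ s) * algebraMap R (Localization S) ((s : R) ^ p))
          = algebraMap R (Localization S) (δR r * (s : R) ^ p - r ^ p * δR s) := by
        have h := IsLocalization.mk'_spec (Localization S)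
          (δR r * (s : R) ^ p - r ^ p * δR s) t
        rw [← map_mul]
        exact h
      have hkey : (s : R) ^ p * φ r - φ s * r ^ p = (p : ℕ) * (δR r * (s : R) ^ p - r ^ p * δR s) := by
        linear_combination r ^ p * hδR (s : R) - (s : R) ^ p * hδR r
      have h4 : algebraMap R (Localization S) ((s : R) ^ p) * algebraMap R (Localization S) (φ r)
          - algebraMap R (Localization S) (φ s) * algebraMap R (Localization S) (r ^ p)
          = (p : Localization S)
            * algebraMap R (Localization S) (δR r * (s : R) ^ p - r ^ p * δR s) := by
        rw [← map_mul, ← map_mul, ← map_sub, hkey, map_mul, map_natCast]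
      have htalg : algebraMap R (Localization S) (t : R)
          = algebraMap R (Localization S) (φ s) * algebraMap R (Localization S) ((s : R) ^ p) := by
        rw [← map_mul]
      rw [htalg]
      linear_combination algebraMap R (Localization S) ((s : R) ^ p) * h1
        - algebraMap R (Localization S) (φ s) * hmulp - (p : Localization S) * h3 + h4
    refine ⟨hfrob, ?_⟩
    intro ψS hψS δS hδS
    -- p is invertible in both `Away` localizations
    have hpuAS : IsUnit ((p : ℕ) : Localization.Away (p : Localization S)) := by
      have h := IsLocalization.Away.algebraMap_isUnit
        (S := Localization.Away (p : Localization S)) (p : Localization S)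
      rwa [map_natCast] at h
    have hc_alg : ∀ r : R, canMap p S (algebraMap R (Localization.Away (p : R)) r)
        = algebraMap (Localization S) (Localization.Away (p : Localization S))
            (algebraMap R (Localization S) r) := fun r =>
      IsLocalization.Away.lift_eq (p : R) _ r
    -- ψS ∘ canMap = canMap ∘ ψ
    have hcψ : ψS.comp (canMap p S) = (canMap p S).comp ψ := by
      refine IsLocalization.ringHom_ext (Submonoid.powers ((p : ℕ) : R))
        (RingHom.ext fun r => ?_)
      simp only [RingHom.comp_apply]
      rw [hc_alg, hψS, hφS, hψ, hc_alg]
    have hcδ : ∀ y : Localization.Away (p : R),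
        canMap p S (δ y) = δS (canMap p S y) := by
      intro y
      refine pcancel hpuAS ?_
      have h1 : ((p : ℕ) : Localization.Away (p : Localization S)) * canMap p S (δ y)
          = canMap p S ((p : Localization.Away (p : R)) * δ y) := by
        rw [map_mul, map_natCast]
      rw [h1, hδ y, map_sub, map_pow, hδS]
      have h2 := RingHom.congr_fun hcψ y
      simp only [RingHom.comp_apply] at h2
      rw [h2]
    have hcδi : ∀ (i : ℕ) (y : Localization.Away (p : R)),
        canMap p S (δ^[i] y) = δS^[i] (canMap p S y) := by
      intro i
      induction i with
      | zero => intro y; simp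
      | succ n ih =>
          intro y
          rw [Function.iterate_succ_apply', Function.iterate_succ_apply', hcδ, ih]
    have hcinv : canMap p S (IsLocalization.Away.invSelf
          (S := Localization.Away (p : R)) (p : R))
        = IsLocalization.Away.invSelf
            (S := Localization.Away (p : Localization S)) (p : Localization S) := by
      have h1 := IsLocalization.Away.mul_invSelf
        (S := Localization.Away (p : R)) (x := ((p : ℕ) : R))
      have h2 := congrArg (canMap p S) h1
      rw [map_mul, map_one, hc_alg, map_natCast] at h2
      have h3 := IsLocalization.Away.mul_invSelf
        (S := Localization.Away (p : Localization S)) (x := ((p : ℕ) : Localization S))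
      have hu : IsUnit (algebraMap (Localization S) (Localization.Away (p : Localization S))
          ((p : ℕ) : Localization S)) := IsLocalization.Away.algebraMap_isUnit _
      refine hu.mul_left_cancel ?_
      rw [h2, h3]
    have hgen : ∀ (x : R) (i : ℕ),
        canMap p S (δ^[i] (algebraMap R (Localization.Away (p : R)) x *
          IsLocalization.Away.invSelf (S := Localization.Away (p : R)) (p : R)))
        = δS^[i] (algebraMap (Localization S) (Localization.Away (p : Localization S))
            (algebraMap R (Localization S) x) *
          IsLocalization.Away.invSelf
            (S := Localization.Away (p : Localization S)) (p : Localization S)) := by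
      intro x i
      rw [hcδi, map_mul, hc_alg, hcinv]
    -- δS maps the image of `Localization S` to itself
    have hδS_alg : ∀ a : Localization S, ∃ b : Localization S,
        δS (algebraMap (Localization S) (Localization.Away (p : Localization S)) a)
          = algebraMap (Localization S) (Localization.Away (p : Localization S)) b := by
      intro a
      obtain ⟨b, hb⟩ := hfrob a
      refine ⟨b, pcancel hpuAS ?_⟩
      rw [hδS, hψS, ← map_pow, ← map_sub, hb, map_mul, map_natCast]
    -- the δ-stable generating set
    set GA : Set (Localization.Away (p : Localization S)) :=
      {y | ∃ x ∈ I, ∃ i : ℕ,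
        y = δS^[i] (algebraMap (Localization S) (Localization.Away (p : Localization S))
            (algebraMap R (Localization S) x) *
          IsLocalization.Away.invSelf
            (S := Localization.Away (p : Localization S)) (p : Localization S))} with hGA
    set T : Set (Localization.Away (p : Localization S)) :=
      Set.range (algebraMap (Localization S) (Localization.Away (p : Localization S))) ∪ GA
      with hTdef
    have hTδ : ∀ t ∈ T, δS t ∈ Subring.closure T := by
      rintro t (⟨a, rfl⟩ | ⟨x, hx, i, rfl⟩)
      · obtain ⟨b, hb⟩ := hδS_alg a
        rw [hb]
        exact Subring.subset_closure (Or.inl ⟨b, rfl⟩)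
      · rw [← Function.iterate_succ_apply' δS i]
        exact Subring.subset_closure (Or.inr ⟨x, hx, i + 1, rfl⟩)
    have hTiter := closure_delta_iter hp hpuAS ψS δS hδS T hTδ
    have hz : ∀ z ∈ I.map (algebraMap R (Localization S)),
        algebraMap (Localization S) (Localization.Away (p : Localization S)) z *
          IsLocalization.Away.invSelf
            (S := Localization.Away (p : Localization S)) (p : Localization S)
          ∈ Subring.closure T := by
      intro z hzm
      have hzm' : z ∈ Submodule.span (Localization S)
          ((algebraMap R (Localization S)) '' (I : Set R)) := hzm
      clear hzm
      induction hzm' using Submodule.span_induction with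
      | mem w hw =>
          obtain ⟨x, hx, rfl⟩ := hw
          exact Subring.subset_closure (Or.inr ⟨x, hx, 0, by simp⟩)
      | zero => rw [map_zero, zero_mul]; exact zero_mem _
      | add u v hu hv du dv => rw [map_add, add_mul]; exact add_mem du dv
      | smul c w hw dw =>
          rw [smul_eq_mul, map_mul, mul_assoc]
          exact mul_mem (Subring.subset_closure (Or.inl ⟨c, rfl⟩)) dw
    -- finally, the equality of subalgebras
    refine le_antisymm (Algebra.adjoin_le ?_) (Algebra.adjoin_le ?_)
    · rintro _ ⟨y, hy, rfl⟩
      induction hy using Algebra.adjoin_induction with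
      | mem w hw =>
          obtain ⟨x, hx, i, rfl⟩ := hw
          rw [hgen x i]
          exact Algebra.subset_adjoin
            ⟨algebraMap R (Localization S) x, Ideal.mem_map_of_mem _ hx, i, rfl⟩
      | algebraMap r =>
          rw [hc_alg]
          exact Subalgebra.algebraMap_mem _ (algebraMap R (Localization S) r)
      | add u v hu hv du dv => rw [map_add]; exact add_mem du dv
      | mul u v hu hv du dv => rw [map_mul]; exact mul_mem du dv
    · rintro _ ⟨z, hzm, i, rfl⟩
      have h1 := hTiter i _ (hz z hzm)
      have hT_sub : T ⊆ (Algebra.adjoin (Localization S)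
          (⇑(canMap p S) '' (Algebra.adjoin R
            {y : Localization.Away (p : R) | ∃ x ∈ I, ∃ i : ℕ,
              y = δ^[i] (algebraMap R (Localization.Away (p : R)) x *
                IsLocalization.Away.invSelf (S := Localization.Away (p : R)) (p : R))} :
            Set (Localization.Away (p : R)))) : Set (Localization.Away (p : Localization S))) := by
        rintro t (⟨a, rfl⟩ | ⟨x, hx, j, rfl⟩)
        · exact Subalgebra.algebraMap_mem _ a
        · exact Algebra.subset_adjoin
            ⟨_, Algebra.subset_adjoin ⟨x, hx, j, rfl⟩, hgen x j⟩
      have h2 := Subring.closure_le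
        (t := (Algebra.adjoin (Localization S)
          (⇑(canMap p S) '' (Algebra.adjoin R
            {y : Localization.Away (p : R) | ∃ x ∈ I, ∃ i : ℕ,
              y = δ^[i] (algebraMap R (Localization.Away (p : R)) x *
                IsLocalization.Away.invSelf (S := Localization.Away (p : R)) (p : R))} :
            Set (Localization.Away (p : R))))).toSubring) |>.mpr hT_sub
      exact h2 h1
end
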